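/- arXiv:1204.6650 — 6 statements merged into one kernel-verified Lean document; each statement's English description precedes it below -/
import Mathlib

section
/- If X has an absolutely continuous density p with finite Fisher information I(X), then sup_x p(x) ≤ √(I(X)). -/
open MeasureTheory Real

/-- If `X` has an absolutely continuous density `p` with finite Fisher information `I`,
then `p(x) ≤ √I` for every `x`. -/
theorem density_le_sqrt_fisher
    (p p' : ℝ → ℝ) (I : ℝ)
    (hnn : ∀ x, 0 ≤ p x) (hint : Integrable p) (h1 : ∫ x, p x = 1)
    (hFTC : ∀ a b : ℝ, p b - p a = ∫ x in a..b, p' x)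
    (hconv : ∀ x, p x = 0 → p' x = 0)
    (hIfin : IntegrableOn (fun x => (p' x) ^ 2 / p x) {x | 0 < p x})
    (hI : I = ∫ x in {x | 0 < p x}, (p' x) ^ 2 / p x) :
    ∀ x, p x ≤ Real.sqrt I := by
  classical
  set S : Set ℝ := {x | 0 < p x} with hS
  set f : ℝ → ℝ := fun x => (p' x) ^ 2 / p x with hf
  have hf0 : ∀ x, 0 ≤ f x := fun x => div_nonneg (sq_nonneg _) (hnn x)
  have hI0 : 0 ≤ I := hI ▸ integral_nonneg hf0
  -- measurable representative of p
  have hpm : AEStronglyMeasurable p volume := hint.1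
  set q : ℝ → ℝ := hpm.mk p with hq
  have hqm : Measurable q := hpm.stronglyMeasurable_mk.measurable
  have hpq : p =ᵐ[volume] q := hpm.ae_eq_mk
  set T : Set ℝ := {x | 0 < q x} with hT
  have hTm : MeasurableSet T := measurableSet_lt measurable_const hqm
  have hmem : ∀ᵐ x ∂(volume : Measure ℝ), x ∈ S ↔ x ∈ T := by
    filter_upwards [hpq] with x hx
    simp [hS, hT, hx]
  have hST : S =ᵐ[volume] T := Filter.eventuallyEq_set.mpr hmem
  have hrestr : volume.restrict S = volume.restrict T :=
    Measure.restrict_congr_set hST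
  -- f vanishes off S
  have hfS : ∀ x, x ∉ S → f x = 0 := by
    intro x hx
    have hp0 : p x = 0 := le_antisymm (not_lt.1 hx) (hnn x)
    simp [hf, hp0]
  have hp'S : ∀ x, x ∉ S → p' x = 0 := by
    intro x hx
    exact hconv x (le_antisymm (not_lt.1 hx) (hnn x))
  -- measurable representative of f on T
  have hfm : AEStronglyMeasurable f (volume.restrict T) := by
    rw [← hrestr]; exact hIfin.1
  set f₀ : ℝ → ℝ := hfm.mk f with hf₀
  have hf₀m : Measurable f₀ := hfm.stronglyMeasurable_mk.measurable
  have hff₀ : ∀ᵐ x ∂(volume : Measure ℝ), x ∈ T → f x = f₀ x :=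
    (ae_restrict_iff' hTm).mp hfm.ae_eq_mk
  have hfae : f =ᵐ[volume] T.indicator f₀ := by
    filter_upwards [hmem, hff₀] with x hx hx'
    by_cases hxT : x ∈ T
    · rw [Set.indicator_of_mem hxT]; exact hx' hxT
    · rw [Set.indicator_of_notMem hxT]
      exact hfS x (fun hxS => hxT (hx.mp hxS))
  have hfameas : AEMeasurable f volume :=
    ⟨T.indicator f₀, (hf₀m.indicator hTm), hfae⟩
  -- the two L² factors
  set A : ℝ → ENNReal := fun x => ENNReal.ofReal (Real.sqrt (f x)) with hA
  set B : ℝ → ENNReal := fun x => ENNReal.ofReal (Real.sqrt (p x)) with hB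
  have hAmeas : AEMeasurable A volume :=
    (ENNReal.measurable_ofReal.comp Real.continuous_sqrt.measurable).comp_aemeasurable hfameas
  have hBmeas : AEMeasurable B volume :=
    (ENNReal.measurable_ofReal.comp Real.continuous_sqrt.measurable).comp_aemeasurable
      hpm.aemeasurable
  -- pointwise factorization
  have hAB : ∀ x, ENNReal.ofReal |p' x| = A x * B x := by
    intro x
    by_cases hx : 0 < p x
    · have hpne : p x ≠ 0 := ne_of_gt hx
      rw [hA, hB, ← ENNReal.ofReal_mul (Real.sqrt_nonneg _),
        ← Real.sqrt_mul (hf0 x), hf, div_mul_cancel₀ _ hpne, Real.sqrt_sq_eq_abs]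
    · have hp0 : p x = 0 := le_antisymm (not_lt.1 hx) (hnn x)
      have hp'0 : p' x = 0 := hconv x hp0
      simp [hA, hB, hf, hp'0, hp0]
  -- squares of the factors
  have hA2 : ∀ x, A x ^ (2 : ℝ) = ENNReal.ofReal (f x) := by
    intro x
    rw [hA, ENNReal.ofReal_rpow_of_nonneg (Real.sqrt_nonneg _) (by norm_num)]
    congr 1
    rw [show ((2 : ℝ)) = ((2 : ℕ) : ℝ) by norm_num, Real.rpow_natCast,
      Real.sq_sqrt (hf0 x)]
  have hB2 : ∀ x, B x ^ (2 : ℝ) = ENNReal.ofReal (p x) := by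
    intro x
    rw [hB, ENNReal.ofReal_rpow_of_nonneg (Real.sqrt_nonneg _) (by norm_num)]
    congr 1
    rw [show ((2 : ℝ)) = ((2 : ℕ) : ℝ) by norm_num, Real.rpow_natCast,
      Real.sq_sqrt (hnn x)]
  -- ∫⁻ A² = ofReal I
  have hintA2 : ∫⁻ x, A x ^ (2 : ℝ) ∂volume = ENNReal.ofReal I := by
    calc ∫⁻ x, A x ^ (2 : ℝ) ∂volume
        = ∫⁻ x, ENNReal.ofReal (f x) ∂volume := by
          simp only [hA2]
      _ = ∫⁻ x, T.indicator (fun y => ENNReal.ofReal (f y)) x ∂volume := by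
          apply lintegral_congr_ae
          filter_upwards [hmem] with x hx
          by_cases hxT : x ∈ T
          · rw [Set.indicator_of_mem hxT]
          · rw [Set.indicator_of_notMem hxT, hfS x (fun hxS => hxT (hx.mp hxS))]
            simp
      _ = ∫⁻ x in T, ENNReal.ofReal (f x) ∂volume := lintegral_indicator hTm _
      _ = ∫⁻ x in S, ENNReal.ofReal (f x) ∂volume := by rw [hrestr]
      _ = ENNReal.ofReal (∫ x in S, f x) := by
          rw [MeasureTheory.ofReal_integral_eq_lintegral_ofReal hIfin
            (Filter.Eventually.of_forall hf0)]
      _ = ENNReal.ofReal I := by rw [hI]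
  -- ∫⁻ B² = 1
  have hintB2 : ∫⁻ x, B x ^ (2 : ℝ) ∂volume = 1 := by
    calc ∫⁻ x, B x ^ (2 : ℝ) ∂volume
        = ∫⁻ x, ENNReal.ofReal (p x) ∂volume := by simp only [hB2]
      _ = ENNReal.ofReal (∫ x, p x) := by
          rw [MeasureTheory.ofReal_integral_eq_lintegral_ofReal hint
            (Filter.Eventually.of_forall hnn)]
      _ = 1 := by rw [h1]; simp
  -- Cauchy–Schwarz
  have hconj : Real.HolderConjugate 2 2 := Real.HolderConjugate.two_two
  have hCS : ∫⁻ x, ENNReal.ofReal |p' x| ∂volume ≤ ENNReal.ofReal (Real.sqrt I) := by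
    calc ∫⁻ x, ENNReal.ofReal |p' x| ∂volume
        = ∫⁻ x, (A * B) x ∂volume := by
          apply lintegral_congr; intro x; exact hAB x
      _ ≤ (∫⁻ x, A x ^ (2:ℝ) ∂volume) ^ (1/(2:ℝ)) *
            (∫⁻ x, B x ^ (2:ℝ) ∂volume) ^ (1/(2:ℝ)) :=
          ENNReal.lintegral_mul_le_Lp_mul_Lq volume hconj hAmeas hBmeas
      _ = ENNReal.ofReal I ^ (1/(2:ℝ)) := by
          rw [hintA2, hintB2]; simp
      _ = ENNReal.ofReal (Real.sqrt I) := by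
          rw [ENNReal.ofReal_rpow_of_nonneg hI0 (by norm_num),
            Real.sqrt_eq_rpow]
  -- key estimate: |p b - p a| ≤ √I
  have key2 : ∀ a b : ℝ, a ≤ b → |p b - p a| ≤ Real.sqrt I := by
    intro a b hab
    rw [hFTC a b]
    by_cases hInt : IntervalIntegrable p' volume a b
    · have h1' : |∫ x in a..b, p' x| ≤ ∫ x in a..b, |p' x| :=
        intervalIntegral.abs_integral_le_integral_abs hab
      have h2' : (∫ x in a..b, |p' x|) = ∫ x in Set.Ioc a b, |p' x| :=
        intervalIntegral.integral_of_le hab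
      have habs : IntegrableOn (fun x => |p' x|) (Set.Ioc a b) volume := by
        have := hInt.1
        exact this.abs
      have h3' : (∫ x in Set.Ioc a b, |p' x|) =
          (∫⁻ x in Set.Ioc a b, ENNReal.ofReal |p' x| ∂volume).toReal := by
        rw [MeasureTheory.integral_eq_lintegral_of_nonneg_ae
          (Filter.Eventually.of_forall (fun x => abs_nonneg _))
          habs.aestronglyMeasurable]
      have h4' : (∫⁻ x in Set.Ioc a b, ENNReal.ofReal |p' x| ∂volume) ≤
          ENNReal.ofReal (Real.sqrt I) :=
        le_trans (lintegral_mono' Measure.restrict_le_self le_rfl) hCS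
      have h5' : (∫⁻ x in Set.Ioc a b, ENNReal.ofReal |p' x| ∂volume).toReal ≤
          Real.sqrt I := by
        have := ENNReal.toReal_mono ENNReal.ofReal_ne_top h4'
        rwa [ENNReal.toReal_ofReal (Real.sqrt_nonneg _)] at this
      calc |∫ x in a..b, p' x| ≤ ∫ x in a..b, |p' x| := h1'
        _ ≤ Real.sqrt I := by rw [h2', h3']; exact h5'
    · rw [intervalIntegral.integral_undef hInt]
      simp [Real.sqrt_nonneg]
  have key : ∀ a b : ℝ, |p b - p a| ≤ Real.sqrt I := by
    intro a b
    rcases le_total a b with h | h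
    · exact key2 a b h
    · rw [abs_sub_comm]; exact key2 b a h
  -- small values of p exist
  have hsmall : ∀ ε : ℝ, 0 < ε → ∃ a, p a < ε := by
    intro ε hε
    by_contra hcon
    push_neg at hcon
    have : Integrable (fun _ : ℝ => ε) volume := by
      apply hint.mono aestronglyMeasurable_const
      refine Filter.Eventually.of_forall (fun a => ?_)
      rw [Real.norm_eq_abs, Real.norm_eq_abs, abs_of_pos hε, abs_of_nonneg (hnn a)]
      exact hcon a
    rw [integrable_const_iff] at this
    rcases this with h | h
    · exact hε.ne' h
    · have := h.measure_univ_lt_top; simp at this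
  -- conclusion
  intro x
  refine le_of_forall_pos_le_add ?_
  intro ε hε
  obtain ⟨a, ha⟩ := hsmall ε hε
  have : p x - p a ≤ |p x - p a| := le_abs_self _
  have h' := key a x
  nlinarith [hnn a]
end

section
/- If X has an absolutely continuous density with finite Fisher information I(X), then its characteristic function f(t) = E[e^{itX}] satisfies |f(t)| ≤ √(I(X))/|t| for all t ≠ 0. -/
open MeasureTheory Real

section Auxiliary
open Set
open scoped ENNReal NNReal

lemma aux_aesm (p p' : ℝ → ℝ) (hint : Integrable p) (h1 : ∫ x, p x = 1)
    (hFTC : ∀ a b : ℝ, p b - p a = ∫ x in a..b, p' x) :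
    AEStronglyMeasurable p' (volume : Measure ℝ) := by
  by_contra hmeas
  have key : ∀ c d : ℝ, ¬ IntervalIntegrable p' volume c d → p c = p d := by
    intro c d h
    have h2 := hFTC c d
    rw [intervalIntegral.integral_undef h] at h2
    linarith
  obtain ⟨n, hn⟩ : ∃ n : ℕ, ¬ AEStronglyMeasurable p' (volume.restrict (Icc (-(n:ℝ)) n)) := by
    by_contra h
    push_neg at h
    have h2 : AEStronglyMeasurable p' (volume.restrict (⋃ n : ℕ, Icc (-(n:ℝ)) n)) :=
      aestronglyMeasurable_iUnion_iff.mpr h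
    have hU : (⋃ n : ℕ, Icc (-(n:ℝ)) (n:ℝ)) = univ := by
      ext x
      simp only [mem_iUnion, mem_Icc, mem_univ, iff_true]
      refine ⟨⌈|x|⌉₊, ?_, ?_⟩
      · have := Nat.le_ceil |x|
        have h3 := neg_abs_le x
        linarith
      · have := Nat.le_ceil |x|
        have h3 := le_abs_self x
        linarith
    rw [hU, Measure.restrict_univ] at h2
    exact hmeas h2
  set a : ℝ := -(n:ℝ) with ha
  set b : ℝ := (n:ℝ) with hb
  have hab : a ≤ b := by
    simp only [ha, hb, neg_le_self_iff, Nat.cast_nonneg]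
  have hnii : ¬ IntervalIntegrable p' volume a b := by
    intro h
    have h2 := (intervalIntegrable_iff_integrableOn_Ioc_of_le hab).mp h
    have h3 : AEStronglyMeasurable p' (volume.restrict (Ioc a b)) := h2.aestronglyMeasurable
    rw [Measure.restrict_congr_set Ioc_ae_eq_Icc] at h3
    exact hn h3
  have mono : ∀ {c d c' d' : ℝ}, c ≤ c' → d' ≤ d → c' ≤ d' →
      ¬ IntervalIntegrable p' volume c' d' → ¬ IntervalIntegrable p' volume c d := by
    intro c d c' d' h1' h2' h3' h4 h5
    exact h4 (h5.mono_set (by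
      rw [uIcc_of_le h3', uIcc_of_le (by linarith)]
      exact Icc_subset_Icc h1' h2'))
  -- p is constant (= p b) outside (a,b)
  have hout1 : ∀ c, c ≤ a → p c = p b := fun c hc =>
    key c b (mono hc le_rfl hab hnii)
  have hout2 : ∀ d, b ≤ d → p a = p d := fun d hd =>
    key a d (mono le_rfl hd hab hnii)
  have hpab : p a = p b := key a b hnii
  -- the constant is 0
  have hpb0 : p b = 0 := by
    have hio : IntegrableOn p (Iic a) volume := hint.integrableOn
    have hconst : IntegrableOn (fun _ => p b) (Iic a) volume :=
      hio.congr_fun (fun x hx => hout1 x hx) measurableSet_Iic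
    rcases (integrableOn_const_iff (C := p b)).mp hconst with h | h
    · simpa using h
    · rw [Real.volume_Iic] at h; exact absurd h (by simp)
  -- sSup / sInf construction
  set S : Set ℝ := {c | c ∈ Icc a b ∧ IntervalIntegrable p' volume a c} with hS
  set T : Set ℝ := {d | d ∈ Icc a b ∧ IntervalIntegrable p' volume d b} with hT
  have haS : a ∈ S := ⟨⟨le_rfl, hab⟩, IntervalIntegrable.refl⟩
  have hbT : b ∈ T := ⟨⟨hab, le_rfl⟩, IntervalIntegrable.refl⟩
  have hSbdd : BddAbove S := ⟨b, fun c hc => hc.1.2⟩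
  have hTbdd : BddBelow T := ⟨a, fun d hd => hd.1.1⟩
  set s := sSup S with hs
  set u := sInf T with hu
  have has' : a ≤ s := le_csSup hSbdd haS
  have hsb : s ≤ b := csSup_le ⟨a, haS⟩ (fun c hc => hc.1.2)
  have hau : a ≤ u := le_csInf ⟨b, hbT⟩ (fun d hd => hd.1.1)
  have hub : u ≤ b := csInf_le hTbdd hbT
  have hsu : s ≤ u := by
    by_contra h
    push_neg at h
    obtain ⟨c1, hc1S, hc1⟩ := exists_lt_of_lt_csSup ⟨a, haS⟩ h
    obtain ⟨d1, hd1T, hd1⟩ := exists_lt_of_csInf_lt ⟨b, hbT⟩ hc1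
    have i1 : IntegrableOn p' (Ioc a c1) volume :=
      (intervalIntegrable_iff_integrableOn_Ioc_of_le hc1S.1.1).mp hc1S.2
    have i2 : IntegrableOn p' (Ioc d1 b) volume :=
      (intervalIntegrable_iff_integrableOn_Ioc_of_le hd1T.1.2).mp hd1T.2
    have i3 : IntegrableOn p' (Ioc a b) volume := by
      refine (i1.union i2).mono_set ?_
      intro x hx
      rcases le_or_gt x c1 with h' | h'
      · exact Or.inl ⟨hx.1, h'⟩
      · exact Or.inr ⟨lt_trans hd1 h', hx.2⟩
    exact hnii ((intervalIntegrable_iff_integrableOn_Ioc_of_le hab).mpr i3)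
  -- p vanishes away from s
  have hzero : ∀ x : ℝ, x ≠ s → p x = 0 := by
    intro x hx
    rcases le_or_gt x a with h' | h'
    · rw [hout1 x h', hpb0]
    rcases le_or_gt b x with h'' | h''
    · rw [← hout2 x h'', hpab, hpb0]
    rcases lt_or_gt_of_ne hx with hlt | hgt
    · -- x < s ≤ u, so x ∉ T, so ¬ II x b, so p x = p b = 0
      have hxT : x ∉ T := fun hmem => absurd (csInf_le hTbdd hmem) (by linarith)
      have : ¬ IntervalIntegrable p' volume x b := fun hii => hxT ⟨⟨h'.le, h''.le⟩, hii⟩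
      rw [key x b this, hpb0]
    · -- s < x, so x ∉ S, so ¬ II a x, so p x = p a = 0
      have hxS : x ∉ S := fun hmem => absurd (le_csSup hSbdd hmem) (by linarith)
      have : ¬ IntervalIntegrable p' volume a x := fun hii => hxS ⟨⟨h'.le, h''.le⟩, hii⟩
      rw [← key a x this, hpab, hpb0]
  have hae : p =ᵐ[volume] (fun _ => (0:ℝ)) := by
    refine measure_mono_null (fun x hx => ?_) (measure_singleton s)
    simp only [mem_setOf_eq] at hx ⊢
    by_contra h
    exact hx (hzero x h)
  have : (1:ℝ) = 0 := by
    rw [← h1, integral_congr_ae hae, integral_zero]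
  norm_num at this


lemma aux_l1 (p p' : ℝ → ℝ) (I : ℝ)
    (hnn : ∀ x, 0 ≤ p x) (hint : Integrable p) (h1 : ∫ x, p x = 1)
    (hconv : ∀ x, p x = 0 → p' x = 0)
    (hIfin : IntegrableOn (fun x => (p' x) ^ 2 / p x) {x | 0 < p x})
    (hI : I = ∫ x in {x | 0 < p x}, (p' x) ^ 2 / p x)
    (hmeas : AEStronglyMeasurable p' (volume : Measure ℝ)) :
    Integrable p' ∧ ∫ x, |p' x| ≤ Real.sqrt I := by
  classical
  obtain ⟨q₀, hq₀m, hq₀⟩ := hint.aestronglyMeasurable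
  set q : ℝ → ℝ := fun x => max (q₀ x) 0 with hqdef
  have hqm : Measurable q := (hq₀m.measurable.max measurable_const)
  have hqnn : ∀ x, 0 ≤ q x := fun x => le_max_right _ _
  have hpq : p =ᵐ[volume] q := by
    filter_upwards [hq₀] with x hx
    have : q x = max (p x) 0 := by rw [hqdef]; simp only []; rw [hx]
    rw [this, max_eq_left (hnn x)]
  set S : Set ℝ := {x | 0 < q x} with hSdef
  have hSm : MeasurableSet S := measurableSet_lt measurable_const hqm
  have hrestrict : volume.restrict {x | 0 < p x} = volume.restrict S := by
    refine Measure.restrict_congr_set ?_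
    filter_upwards [hpq] with x hx
    change (0 < p x) = (0 < q x)
    rw [hx]
  set f : ℝ → ℝ := fun x => (p' x) ^ 2 / p x with hfdef
  have hIfin' : Integrable f (volume.restrict S) := by
    rw [← hrestrict]; exact hIfin
  have hI' : I = ∫ x, f x ∂(volume.restrict S) := by rw [hI, hrestrict]
  have hfnnS : ∀ᵐ x ∂(volume.restrict S), 0 ≤ f x := by
    rw [ae_restrict_iff' hSm]
    filter_upwards [hpq] with x hx hxS
    have hp0 : 0 < p x := by rw [hx]; exact hxS
    have : (0:ℝ) ≤ (p' x) ^ 2 := sq_nonneg _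
    positivity
  have hI0 : 0 ≤ I := hI' ▸ integral_nonneg_of_ae hfnnS
  obtain ⟨g, hgm, hg⟩ := hIfin'.aestronglyMeasurable
  have hg' : ∀ᵐ x, x ∈ S → f x = g x := (ae_restrict_iff' hSm).mp hg
  set W : ℝ → ℝ := S.indicator (fun x => max (g x) 0) with hWdef
  have hWm : Measurable W :=
    Measurable.indicator (hgm.measurable.max measurable_const) hSm
  have hWnn : ∀ x, 0 ≤ W x := fun x => by
    by_cases h : x ∈ S
    · rw [hWdef, indicator_of_mem h]; exact le_max_right _ _
    · rw [hWdef, indicator_of_notMem h]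
  have hW : (fun x => S.indicator f x) =ᵐ[volume] W := by
    filter_upwards [hg', hpq] with x hgx hx
    by_cases h : x ∈ S
    · have hp0 : 0 < p x := by rw [hx]; exact h
      have hfx : 0 ≤ f x := by
        have : (0:ℝ) ≤ (p' x) ^ 2 := sq_nonneg _
        rw [hfdef]; positivity
      rw [indicator_of_mem h, hWdef, indicator_of_mem h, ← hgx h,
        max_eq_left hfx]
    · rw [indicator_of_notMem h, hWdef, indicator_of_notMem h]
  -- key pointwise identity
  have claim : ∀ᵐ x, |p' x| = Real.sqrt (W x) * Real.sqrt (q x) := by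
    filter_upwards [hg', hpq] with x hgx hx
    by_cases h : x ∈ S
    · have hp0 : 0 < p x := by rw [hx]; exact h
      have hWx : W x = (p' x) ^ 2 / p x := by
        have hfx : 0 ≤ f x := by
          have : (0:ℝ) ≤ (p' x) ^ 2 := sq_nonneg _
          rw [hfdef]; positivity
        rw [hWdef, indicator_of_mem h, ← hgx h, max_eq_left hfx]
      rw [hWx, ← hx, ← Real.sqrt_mul (by positivity) (p x),
        div_mul_cancel₀ _ (ne_of_gt hp0), Real.sqrt_sq_eq_abs]
    · have hq0 : q x = 0 := le_antisymm (not_lt.mp h) (hqnn x)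
      have hp0 : p x = 0 := by rw [hx, hq0]
      have hp'0 : p' x = 0 := hconv x hp0
      rw [hWdef, indicator_of_notMem h, hp'0, Real.sqrt_zero, zero_mul,
        abs_zero]
  -- lintegral of W
  have LW : ∫⁻ x, ENNReal.ofReal (W x) = ENNReal.ofReal I := by
    have e1 : ∫⁻ x, ENNReal.ofReal (W x) = ∫⁻ x, ENNReal.ofReal (S.indicator f x) :=
      lintegral_congr_ae (hW.symm.mono fun x hx => congrArg ENNReal.ofReal hx)
    rw [e1]
    have e2 : (fun x => ENNReal.ofReal (S.indicator f x)) =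
        S.indicator (fun x => ENNReal.ofReal (f x)) := by
      funext x
      by_cases h : x ∈ S
      · rw [indicator_of_mem h, indicator_of_mem h]
      · rw [indicator_of_notMem h, indicator_of_notMem h, ENNReal.ofReal_zero]
    rw [e2, lintegral_indicator hSm, ← ofReal_integral_eq_lintegral_ofReal hIfin' hfnnS, ← hI']
  -- lintegral of q
  have hqint : Integrable q := hint.congr hpq
  have Lq : ∫⁻ x, ENNReal.ofReal (q x) = 1 := by
    rw [← ofReal_integral_eq_lintegral_ofReal hqint
      (Filter.Eventually.of_forall hqnn)]
    rw [← integral_congr_ae hpq, h1, ENNReal.ofReal_one]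
  -- Hölder
  have hconj : Real.HolderConjugate 2 2 := ⟨by norm_num, by norm_num, by norm_num⟩
  have hf2 : AEMeasurable (fun x => ENNReal.ofReal (Real.sqrt (W x))) volume :=
    (ENNReal.measurable_ofReal.comp (hWm.sqrt)).aemeasurable
  have hg2 : AEMeasurable (fun x => ENNReal.ofReal (Real.sqrt (q x))) volume :=
    (ENNReal.measurable_ofReal.comp (hqm.sqrt)).aemeasurable
  have holder := ENNReal.lintegral_mul_le_Lp_mul_Lq volume hconj hf2 hg2
  have epow : ∀ (h : ℝ → ℝ), (∀ x, 0 ≤ h x) →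
      ∀ x, (ENNReal.ofReal (Real.sqrt (h x))) ^ (2:ℝ) = ENNReal.ofReal (h x) := by
    intro h hh x
    rw [ENNReal.ofReal_rpow_of_nonneg (Real.sqrt_nonneg _) (by norm_num : (0:ℝ) ≤ 2)]
    congr 1
    rw [show ((2:ℝ)) = ((2:ℕ):ℝ) by norm_num, Real.rpow_natCast,
      Real.sq_sqrt (hh x)]
  have hfpow : ∫⁻ x, (ENNReal.ofReal (Real.sqrt (W x))) ^ (2:ℝ) = ENNReal.ofReal I := by
    rw [← LW]; exact lintegral_congr fun x => epow W hWnn x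
  have hgpow : ∫⁻ x, (ENNReal.ofReal (Real.sqrt (q x))) ^ (2:ℝ) = 1 := by
    rw [← Lq]; exact lintegral_congr fun x => epow q hqnn x
  rw [hfpow, hgpow, ENNReal.one_rpow, mul_one] at holder
  have hIhalf : (ENNReal.ofReal I) ^ ((1:ℝ)/2) = ENNReal.ofReal (Real.sqrt I) := by
    rw [ENNReal.ofReal_rpow_of_nonneg hI0 (by norm_num : (0:ℝ) ≤ 1/2), Real.sqrt_eq_rpow]
  rw [hIhalf] at holder
  -- conclude: lintegral of ‖p'‖ bounded
  have Lmain : ∫⁻ x, (‖p' x‖₊ : ENNReal) ≤ ENNReal.ofReal (Real.sqrt I) := by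
    have e3 : ∫⁻ x, (‖p' x‖₊ : ENNReal) =
        ∫⁻ x, (fun y => ENNReal.ofReal (Real.sqrt (W y))) x *
          (fun y => ENNReal.ofReal (Real.sqrt (q y))) x := by
      refine lintegral_congr_ae ?_
      filter_upwards [claim] with x hx
      rw [← enorm_eq_nnnorm, Real.enorm_eq_ofReal_abs, hx,
        ENNReal.ofReal_mul (Real.sqrt_nonneg _)]
    rw [e3]
    exact le_trans (le_of_eq (by rfl)) holder
  have hp'int : Integrable p' :=
    ⟨hmeas, lt_of_le_of_lt Lmain ENNReal.ofReal_lt_top⟩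
  refine ⟨hp'int, ?_⟩
  have e4 : ∫ x, |p' x| = ∫ x, ‖p' x‖ := by simp [Real.norm_eq_abs]
  rw [e4, ← ENNReal.ofReal_le_ofReal_iff (Real.sqrt_nonneg I),
    ofReal_integral_norm_eq_lintegral_enorm hp'int]
  exact Lmain


lemma aux_ibp (p p' : ℝ → ℝ) (hint : Integrable p)
    (hFTC : ∀ a b : ℝ, p b - p a = ∫ x in a..b, p' x)
    (hp' : Integrable p') (t : ℝ) (ht : t ≠ 0) :
    ‖∫ x : ℝ, Complex.exp (Complex.I * t * x) * (p x : ℂ)‖ ≤ (∫ x, |p' x|) / |t| := by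
  set c : ℂ := Complex.I * t with hc
  have hc0 : c ≠ 0 :=
    mul_ne_zero Complex.I_ne_zero (Complex.ofReal_ne_zero.mpr ht)
  have ht' : 0 < |t| := abs_pos.mpr ht
  set h : ℝ := π / |t| with hh
  have hh0 : 0 < h := div_pos Real.pi_pos ht'
  set E : ℝ → ℂ := fun x => Complex.exp (c * x) with hE
  have hEnorm : ∀ x : ℝ, ‖E x‖ = 1 := by
    intro x
    rw [hE]
    simp only [Complex.norm_exp, hc]
    have : (Complex.I * ↑t * ↑x).re = 0 := by simp [Complex.mul_re]
    rw [this, Real.exp_zero]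
  have hch : Complex.exp (c * h) = -1 := by
    have e0 : c * (h:ℂ) = ((t * h : ℝ) : ℂ) * Complex.I := by
      rw [hc]; push_cast; ring
    rw [e0]
    rcases lt_or_gt_of_ne ht with hlt | hgt
    · have e1 : t * h = -π := by
        rw [hh, abs_of_neg hlt]
        rw [mul_div_assoc', mul_comm, mul_div_assoc, div_neg, div_self ht, mul_neg, mul_one]
      rw [e1, show (((-π : ℝ)) : ℂ) * Complex.I = -(((π:ℝ):ℂ) * Complex.I) by push_cast; ring,
        Complex.exp_neg, Complex.exp_pi_mul_I]
      norm_num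
    · have e1 : t * h = π := by
        rw [hh, abs_of_pos hgt]; field_simp
      rw [e1, Complex.exp_pi_mul_I]
  have hEcont : Continuous E :=
    Complex.continuous_exp.comp (continuous_const.mul Complex.continuous_ofReal)
  -- integrability of E • (real function)
  have haesm : ∀ (g : ℝ → ℝ), Integrable g → Integrable (fun x => E x * (g x : ℂ)) := by
    intro g hg
    refine Integrable.mono' hg.norm
      (hEcont.aestronglyMeasurable.mul
        (Complex.continuous_ofReal.comp_aestronglyMeasurable hg.1)) ?_
    filter_upwards with x
    rw [norm_mul, hEnorm, one_mul, Complex.norm_real, Real.norm_eq_abs]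
  have ig : Integrable (fun x => E x * (p x : ℂ)) := haesm p hint
  have igs : Integrable (fun x => E x * (p (x - h) : ℂ)) :=
    haesm (fun x => p (x - h)) (hint.comp_sub_right h)
  have ig' : Integrable (fun x => E x * (p' x : ℂ)) := haesm p' hp'
  set Int : ℂ := ∫ x : ℝ, E x * (p x : ℂ) with hInt
  set J : ℂ := ∫ x : ℝ, E x * (p' x : ℂ) with hJ
  -- Step A : translation identity
  have stepA : ∫ x : ℝ, E x * ((p x : ℂ) - (p (x - h) : ℂ)) = (1 - Complex.exp (c * h)) * Int := by
    have e1 : ∫ x : ℝ, E x * ((p x : ℂ) - (p (x - h) : ℂ))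
        = (∫ x : ℝ, E x * (p x : ℂ)) - ∫ x : ℝ, E x * (p (x - h) : ℂ) := by
      rw [← integral_sub ig igs]
      congr 1; funext x; ring
    have e2 : ∫ x : ℝ, E x * (p (x - h) : ℂ) = Complex.exp (c * h) * Int := by
      have e3 : ∫ x : ℝ, E x * (p (x - h) : ℂ) = ∫ x : ℝ, E (x + h) * (p x : ℂ) := by
        rw [← integral_sub_right_eq_self (fun y => E (y + h) * (p y : ℂ)) h]
        congr 1; funext x; rw [sub_add_cancel]
      have e4 : (fun x : ℝ => E (x + h) * (p x : ℂ))
          = fun x : ℝ => Complex.exp (c * h) * (E x * (p x : ℂ)) := by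
        funext x
        rw [hE]
        simp only []
        rw [show ((x + h : ℝ) : ℂ) = (x : ℂ) + (h : ℂ) by push_cast; ring, mul_add,
          Complex.exp_add]
        ring
      rw [e3, e4, integral_const_mul, hInt]
    rw [e1, e2, hInt]
    ring
  -- Step B : FTC pointwise
  have stepB : ∀ x : ℝ, ((p x : ℂ) - (p (x - h) : ℂ)) = ∫ s in Set.Ioc (x - h) x, (p' s : ℂ) := by
    intro x
    have hx := hFTC (x - h) x
    rw [intervalIntegral.integral_of_le (by linarith : x - h ≤ x)] at hx
    have hcast : (∫ s in Set.Ioc (x - h) x, (p' s : ℂ)) = ((∫ s in Set.Ioc (x - h) x, p' s : ℝ) : ℂ) :=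
      integral_ofReal
    rw [hcast, ← hx, Complex.ofReal_sub]
  -- the product function
  set G : ℝ × ℝ → ℂ := fun z => if z.1 - h < z.2 ∧ z.2 ≤ z.1 then E z.1 * (p' z.2 : ℂ) else 0
    with hG
  have hA : MeasurableSet {z : ℝ × ℝ | z.1 - h < z.2 ∧ z.2 ≤ z.1} :=
    (measurableSet_lt (measurable_fst.sub measurable_const) measurable_snd).inter
      (measurableSet_le measurable_snd measurable_fst)
  have hGaesm : AEStronglyMeasurable G (volume.prod volume) := by
    have h1' : AEStronglyMeasurable (fun z : ℝ × ℝ => E z.1 * (p' z.2 : ℂ)) (volume.prod volume) :=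
      ((hEcont.comp continuous_fst).aestronglyMeasurable.mul
        ((Complex.continuous_ofReal.comp_aestronglyMeasurable hp'.1).comp_snd))
    have e5 : G = Set.indicator {z : ℝ × ℝ | z.1 - h < z.2 ∧ z.2 ≤ z.1}
        (fun z => E z.1 * (p' z.2 : ℂ)) := by
      funext z; rw [Set.indicator_apply]; rfl
    rw [e5]; exact h1'.indicator hA
  have hGnorm : ∀ z : ℝ × ℝ, (‖G z‖₊ : ℝ≥0∞) =
      Set.indicator (Set.Ico z.2 (z.2 + h)) (fun _ => (‖p' z.2‖₊ : ℝ≥0∞)) z.1 := by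
    intro z
    have hnormval : ‖G z‖ = if z.1 - h < z.2 ∧ z.2 ≤ z.1 then |p' z.2| else 0 := by
      simp only [hG]
      by_cases hz : z.1 - h < z.2 ∧ z.2 ≤ z.1
      · rw [if_pos hz, if_pos hz, norm_mul, hEnorm, one_mul, Complex.norm_real,
          Real.norm_eq_abs]
      · rw [if_neg hz, if_neg hz, norm_zero]
    by_cases hz : z.1 - h < z.2 ∧ z.2 ≤ z.1
    · have hmem : z.1 ∈ Set.Ico z.2 (z.2 + h) := ⟨hz.2, by linarith [hz.1]⟩
      rw [Set.indicator_of_mem hmem]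
      have : ‖G z‖ = |p' z.2| := by rw [hnormval, if_pos hz]
      rw [← enorm_eq_nnnorm (G z), ← ofReal_norm (G z), this, ← enorm_eq_nnnorm (p' z.2), ← ofReal_norm (p' z.2),
        Real.norm_eq_abs]
    · have hmem : z.1 ∉ Set.Ico z.2 (z.2 + h) := by
        intro hcon
        exact hz ⟨by linarith [hcon.2], hcon.1⟩
      rw [Set.indicator_of_notMem hmem]
      have : ‖G z‖ = 0 := by rw [hnormval, if_neg hz]
      rw [← enorm_eq_nnnorm (G z), ← ofReal_norm (G z), this, ENNReal.ofReal_zero]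
  have hGfin : HasFiniteIntegral G (volume.prod volume) := by
    have hswap := lintegral_prod_symm (fun z : ℝ × ℝ => (‖G z‖₊ : ℝ≥0∞)) hGaesm.enorm
    have hinner : ∀ s : ℝ, ∫⁻ x : ℝ, (‖G (x, s)‖₊ : ℝ≥0∞)
        = (‖p' s‖₊ : ℝ≥0∞) * ENNReal.ofReal h := by
      intro s
      have e6 : (fun x : ℝ => (‖G (x, s)‖₊ : ℝ≥0∞))
          = Set.indicator (Set.Ico s (s + h)) (fun _ => (‖p' s‖₊ : ℝ≥0∞)) := by
        funext x; exact hGnorm (x, s)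
      rw [e6, lintegral_indicator measurableSet_Ico, setLIntegral_const,
        Real.volume_Ico]
      norm_num
    show (∫⁻ z, (‖G z‖₊ : ℝ≥0∞) ∂(volume.prod volume)) < ⊤
    rw [hswap]
    simp only [hinner]
    have hm : AEMeasurable (fun y => (‖p' y‖₊ : ℝ≥0∞)) volume := hp'.1.enorm
    rw [lintegral_mul_const'' (ENNReal.ofReal h) hm]
    exact ENNReal.mul_lt_top hp'.2 ENNReal.ofReal_lt_top
  have hGint : Integrable G (volume.prod volume) := ⟨hGaesm, hGfin⟩
  -- Fubini
  have hGun : Integrable (Function.uncurry fun x s => G (x, s)) (volume.prod volume) := by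
    convert hGint using 1
    rfl
  have hswap2 := integral_integral_swap (f := fun x s => G (x, s)) hGun
  -- left inner integral
  have hLfun : ∀ x : ℝ, (∫ s : ℝ, G (x, s)) = E x * ∫ s in Set.Ioc (x - h) x, (p' s : ℂ) := by
    intro x
    have e7 : (fun s : ℝ => G (x, s))
        = fun s : ℝ => E x * Set.indicator (Set.Ioc (x - h) x) (fun s => (p' s : ℂ)) s := by
      funext s
      simp only [hG, Set.indicator_apply]
      by_cases hs : s ∈ Set.Ioc (x - h) x
      · rw [if_pos hs]
        exact if_pos ⟨hs.1, hs.2⟩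
      · rw [if_neg hs, mul_zero]
        exact if_neg fun hcon => hs ⟨hcon.1, hcon.2⟩
    rw [e7, integral_const_mul, integral_indicator measurableSet_Ioc]
  -- right inner integral
  have hRfun : ∀ s : ℝ, (∫ x : ℝ, G (x, s)) = (p' s : ℂ) * ((-2 : ℂ) * E s / c) := by
    intro s
    have e8 : (fun x : ℝ => G (x, s))
        = Set.indicator (Set.Ico s (s + h)) (fun x => E x * (p' s : ℂ)) := by
      funext x
      simp only [hG, Set.indicator_apply]
      by_cases hx : x ∈ Set.Ico s (s + h)
      · rw [if_pos hx]
        exact if_pos ⟨by linarith [hx.2], hx.1⟩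
      · rw [if_neg hx]
        exact if_neg fun hcon => hx ⟨hcon.2, by linarith [hcon.1]⟩
    have hEint : (∫ x in Set.Ico s (s + h), E x)
        = (Complex.exp (c * ((s : ℝ) + h : ℝ)) - Complex.exp (c * s)) / c := by
      rw [show (volume.restrict (Set.Ico s (s + h))) = volume.restrict (Set.Ioc s (s + h)) from
        Measure.restrict_congr_set Ico_ae_eq_Ioc]
      have hthis := integral_exp_mul_complex (a := s) (b := s + h) hc0
      rw [intervalIntegral.integral_of_le (by linarith : s ≤ s + h)] at hthis
      exact hthis
    rw [e8, integral_indicator measurableSet_Ico, integral_mul_const, hEint]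
    have e9 : Complex.exp (c * ((s : ℝ) + h : ℝ)) = -E s := by
      rw [show (((s : ℝ) + h : ℝ) : ℂ) = (s : ℂ) + (h : ℂ) by push_cast; ring, mul_add,
        Complex.exp_add, hch, hE]
      ring
    rw [e9, hE]
    ring
  -- assemble the identity
  have main : (1 - Complex.exp (c * h)) * Int = (-2 / c) * J := by
    have hfun1 : (fun x : ℝ => ∫ s : ℝ, G (x, s))
        = fun x : ℝ => E x * ((p x : ℂ) - (p (x - h) : ℂ)) := by
      funext x
      rw [hLfun x, ← stepB x]
    have l1 : ∫ x : ℝ, (∫ s : ℝ, G (x, s)) = (1 - Complex.exp (c * h)) * Int := by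
      rw [show (∫ x : ℝ, (∫ s : ℝ, G (x, s))) = ∫ x : ℝ, E x * ((p x : ℂ) - (p (x - h) : ℂ)) from
        congrArg _ hfun1]
      exact stepA
    have hfun2 : (fun s : ℝ => ∫ x : ℝ, G (x, s))
        = fun s : ℝ => ((-2 : ℂ) / c) * (E s * (p' s : ℂ)) := by
      funext s
      rw [hRfun s]
      ring
    have l2 : ∫ s : ℝ, (∫ x : ℝ, G (x, s)) = (-2 / c) * J := by
      rw [show (∫ s : ℝ, (∫ x : ℝ, G (x, s)))
          = ∫ s : ℝ, ((-2 : ℂ) / c) * (E s * (p' s : ℂ)) from congrArg _ hfun2]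
      rw [integral_const_mul, hJ]
    rw [← l1, hswap2, l2]
  have hInt_eq : Int = -(J / c) := by
    rw [hch] at main
    have h3 : Int = -2 / c * J / 2 := by linear_combination main / 2
    rw [h3]; ring
  have hcnorm : ‖c‖ = |t| := by
    rw [hc, norm_mul, Complex.norm_I, one_mul, Complex.norm_real, Real.norm_eq_abs]
  have hJle : ‖J‖ ≤ ∫ x, |p' x| := by
    refine le_trans (norm_integral_le_integral_norm _) (le_of_eq ?_)
    refine integral_congr_ae (Filter.Eventually.of_forall fun x => ?_)
    show ‖E x * ((p' x : ℝ) : ℂ)‖ = |p' x|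
    rw [norm_mul, hEnorm, one_mul, Complex.norm_real, Real.norm_eq_abs]
  calc ‖Int‖ = ‖J‖ / |t| := by rw [hInt_eq, norm_neg, norm_div, hcnorm]
    _ ≤ (∫ x, |p' x|) / |t| := by gcongr

end Auxiliary

/-- If `X` has an absolutely continuous density `p` with finite Fisher information `I`,
then the characteristic function `f(t) = ∫ e^{itx} p(x) dx` satisfies `|f(t)| ≤ √I / |t|`
for all `t ≠ 0`. -/
theorem charFun_le_sqrt_fisher_div
    (p p' : ℝ → ℝ) (I : ℝ)
    (hnn : ∀ x, 0 ≤ p x) (hint : Integrable p) (h1 : ∫ x, p x = 1)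
    (hFTC : ∀ a b : ℝ, p b - p a = ∫ x in a..b, p' x)
    (hconv : ∀ x, p x = 0 → p' x = 0)
    (hIfin : IntegrableOn (fun x => (p' x) ^ 2 / p x) {x | 0 < p x})
    (hI : I = ∫ x in {x | 0 < p x}, (p' x) ^ 2 / p x) :
    ∀ t : ℝ, t ≠ 0 →
      ‖∫ x : ℝ, Complex.exp (Complex.I * t * x) * (p x : ℂ)‖ ≤ Real.sqrt I / |t| := by
  intro t ht
  have hmeas := aux_aesm p p' hint h1 hFTC
  obtain ⟨hp'int, hp'norm⟩ := aux_l1 p p' I hnn hint h1 hconv hIfin hI hmeas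
  refine le_trans (aux_ibp p p' hint hFTC hp'int t ht) ?_
  gcongr
end

section
/- If X has an absolutely continuous density p with finite Fisher information I(X), then ∫ p'(x)² dx ≤ I(X)^{3/2}. -/
open MeasureTheory Real

private lemma sqrt_mul_le_half_add {a b : ℝ} (ha : 0 ≤ a) (hb : 0 ≤ b) :
    Real.sqrt (a * b) ≤ (a + b) / 2 := by
  have h1 : a * b ≤ ((a + b) / 2) ^ 2 := by nlinarith [sq_nonneg (a - b)]
  calc Real.sqrt (a * b) ≤ Real.sqrt (((a + b) / 2) ^ 2) := Real.sqrt_le_sqrt h1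
    _ = (a + b) / 2 := Real.sqrt_sq (by positivity)

/-- If `X` has an absolutely continuous density `p` with finite Fisher information `I`,
then `∫ p'(x)² dx ≤ I^{3/2}`. -/
theorem integral_sq_deriv_le_fisher_pow
    (p p' : ℝ → ℝ) (I : ℝ)
    (hnn : ∀ x, 0 ≤ p x) (hint : Integrable p) (h1 : ∫ x, p x = 1)
    (hFTC : ∀ a b : ℝ, p b - p a = ∫ x in a..b, p' x)
    (hconv : ∀ x, p x = 0 → p' x = 0)
    (hIfin : IntegrableOn (fun x => (p' x) ^ 2 / p x) {x | 0 < p x})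
    (hI : I = ∫ x in {x | 0 < p x}, (p' x) ^ 2 / p x) :
    ∫ x, (p' x) ^ 2 ≤ I ^ ((3 : ℝ) / 2) := by
  set s : Set ℝ := {x | 0 < p x} with hs
  have hp0 : ∀ x, x ∉ s → p x = 0 := fun x hx => le_antisymm (not_lt.mp hx) (hnn x)
  have hp'0 : ∀ x, x ∉ s → p' x = 0 := fun x hx => hconv x (hp0 x hx)
  set h : ℝ → ℝ := fun x => p' x ^ 2 / p x with hh
  have hhnn : ∀ x, 0 ≤ h x := fun x => div_nonneg (sq_nonneg _) (hnn x)
  have hhp : ∀ x, p' x ^ 2 = h x * p x := by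
    intro x
    by_cases hx : p x = 0
    · rw [hconv x hx, hx]; simp [hh]
    · rw [hh]; field_simp
  set t : Set ℝ := toMeasurable volume s with ht
  have htm : MeasurableSet t := measurableSet_toMeasurable _ _
  have hsub : s ⊆ t := subset_toMeasurable _ _
  have hrt : (volume : Measure ℝ).restrict t = volume.restrict s :=
    Measure.restrict_toMeasurable_of_sFinite s
  have hIfin' : IntegrableOn h t := by rwa [IntegrableOn, hrt]
  set H : ℝ → ℝ := t.indicator h with hH
  have hHint : Integrable H := hIfin'.integrable_indicator htm
  have hHI : ∫ x, H x = I := by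
    rw [hH, integral_indicator htm, hI]
    show ∫ x, h x ∂(volume.restrict t) = ∫ x, h x ∂(volume.restrict s)
    rw [hrt]
  have hHnn : ∀ x, 0 ≤ H x := fun x => Set.indicator_nonneg (fun y _ => hhnn y) x
  have hsqH : ∀ x, p' x ^ 2 = H x * p x := by
    intro x
    by_cases hx : x ∈ t
    · rw [hH, Set.indicator_of_mem hx]; exact hhp x
    · rw [hH, Set.indicator_of_notMem hx, hp'0 x (fun hxs => hx (hsub hxs))]; ring
  have habs_eq : (fun x => |p' x|) = fun x => Real.sqrt (H x * p x) := by
    funext x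
    rw [← hsqH x, Real.sqrt_sq_eq_abs]
  have habs_meas : AEStronglyMeasurable (fun x => |p' x|) volume := by
    rw [habs_eq]
    exact Real.continuous_sqrt.comp_aestronglyMeasurable
      (hHint.aestronglyMeasurable.mul hint.aestronglyMeasurable)
  have habs_le : ∀ c : ℝ, 0 < c → ∀ x, |p' x| ≤ (c * H x + p x / c) / 2 := by
    intro c hc x
    have h2 : |p' x| = Real.sqrt ((c * H x) * (p x / c)) := by
      rw [congrFun habs_eq x]
      congr 1
      field_simp
    rw [h2]
    exact sqrt_mul_le_half_add (mul_nonneg hc.le (hHnn x)) (div_nonneg (hnn x) hc.le)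
  have habs_int : Integrable (fun x => |p' x|) := by
    refine Integrable.mono' (((hHint.const_mul 1).add (hint.div_const 1)).div_const 2)
      habs_meas ?_
    filter_upwards with x
    rw [Real.norm_eq_abs, abs_abs]
    exact habs_le 1 one_pos x
  set V : ℝ := ∫ x, |p' x| with hV
  have hVnn : 0 ≤ V := integral_nonneg fun x => abs_nonneg _
  have hInn : 0 ≤ I := by
    rw [hI]; exact integral_nonneg fun x => hhnn x
  have hVle : ∀ c : ℝ, 0 < c → V ≤ (c * I + 1 / c) / 2 := by
    intro c hc
    have hgint : Integrable (fun x => (c * H x + p x / c) / 2) :=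
      ((hHint.const_mul c).add (hint.div_const c)).div_const 2
    have hmono : V ≤ ∫ x, (c * H x + p x / c) / 2 :=
      integral_mono habs_int hgint fun x => habs_le c hc x
    calc V ≤ ∫ x, (c * H x + p x / c) / 2 := hmono
      _ = (c * I + 1 / c) / 2 := by
        rw [integral_div, integral_add (hHint.const_mul c) (hint.div_const c),
          integral_const_mul c H, integral_div, hHI, h1]
  have hVI : V ≤ Real.sqrt I := by
    rcases eq_or_lt_of_le hInn with hI0 | hIpos
    · rw [← hI0, Real.sqrt_zero]
      by_contra hVpos
      push_neg at hVpos
      have hc := hVle (1 / V) (by positivity)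
      rw [← hI0, one_div_one_div] at hc
      nlinarith
    · have hsq : Real.sqrt I * Real.sqrt I = I := Real.mul_self_sqrt hInn
      have hspos : 0 < Real.sqrt I := Real.sqrt_pos.mpr hIpos
      have hc := hVle (Real.sqrt I)⁻¹ (by positivity)
      have heq : ((Real.sqrt I)⁻¹ * I + 1 / (Real.sqrt I)⁻¹) / 2 = Real.sqrt I := by
        field_simp
        nlinarith [hsq]
      rwa [heq] at hc
  have hdiff : ∀ a b : ℝ, p b - p a ≤ V := by
    intro a b
    by_cases hib : IntervalIntegrable p' volume a b
    · rw [hFTC a b]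
      calc ∫ x in a..b, p' x ≤ |∫ x in a..b, p' x| := le_abs_self _
        _ ≤ ∫ x in Set.uIoc a b, |p' x| := by
          simpa using intervalIntegral.norm_integral_le_integral_norm_uIoc
            (f := p') (a := a) (b := b) (μ := volume)
        _ ≤ V := setIntegral_le_integral habs_int
            (Filter.Eventually.of_forall fun x => abs_nonneg _)
    · rw [hFTC a b, intervalIntegral.integral_undef hib]
      exact hVnn
  have hsmall : ∀ ε : ℝ, 0 < ε → ∃ a, p a < ε := by
    intro ε hε
    by_contra hcon
    push_neg at hcon
    set N : ℝ := 2 / ε with hN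
    have hN0 : 0 ≤ N := by positivity
    have h2 : ∫ x in Set.Icc (0 : ℝ) N, p x ≤ 1 := by
      rw [← h1]
      exact setIntegral_le_integral hint (Filter.Eventually.of_forall hnn)
    have hfin : (volume (Set.Icc (0 : ℝ) N)) < ⊤ := by
      rw [Real.volume_Icc]; exact ENNReal.ofReal_lt_top
    have h3 : ∫ _x in Set.Icc (0 : ℝ) N, (ε : ℝ) ≤ ∫ x in Set.Icc (0 : ℝ) N, p x :=
      setIntegral_mono_on (integrableOn_const hfin.ne) hint.integrableOn
        measurableSet_Icc fun x _ => hcon x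
    rw [setIntegral_const, Real.volume_real_Icc_of_le hN0, sub_zero,
      smul_eq_mul, hN] at h3
    have : (2 : ℝ) ≤ 1 := by
      have hNe : 2 / ε * ε = 2 := by field_simp
      linarith [le_trans h3 h2, hNe ▸ h3]
    norm_num at this
  have hbound : ∀ x, p x ≤ Real.sqrt I := by
    intro x
    refine le_of_forall_pos_le_add fun ε hε => ?_
    obtain ⟨a, ha⟩ := hsmall ε hε
    have hd := hdiff a x
    linarith
  rcases eq_or_lt_of_le hInn with hI0 | hIpos
  · exfalso
    have hp_eq : p = fun _ => (0 : ℝ) := by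
      funext x
      have hb := hbound x
      rw [← hI0, Real.sqrt_zero] at hb
      exact le_antisymm hb (hnn x)
    rw [hp_eq] at h1
    simp at h1
  · have hmono : ∫ x, p' x ^ 2 ≤ ∫ x, Real.sqrt I * H x := by
      refine integral_mono_of_nonneg (Filter.Eventually.of_forall fun x => sq_nonneg _)
        (hHint.const_mul _) (Filter.Eventually.of_forall fun x => ?_)
      show p' x ^ 2 ≤ Real.sqrt I * H x
      rw [hsqH x, mul_comm (Real.sqrt I) (H x)]
      exact mul_le_mul_of_nonneg_left (hbound x) (hHnn x)
    have hcalc : ∫ x, Real.sqrt I * H x = Real.sqrt I * I := by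
      rw [integral_const_mul (Real.sqrt I) H, hHI]
    have hrpow : Real.sqrt I * I = I ^ ((3 : ℝ) / 2) := by
      have h32 : I ^ ((3 : ℝ) / 2) = I ^ ((1 : ℝ) / 2) * I ^ (1 : ℝ) := by
        rw [← Real.rpow_add hIpos]; norm_num
      rw [h32, Real.rpow_one, ← Real.sqrt_eq_rpow]
    calc ∫ x, p' x ^ 2 ≤ ∫ x, Real.sqrt I * H x := hmono
      _ = Real.sqrt I * I := hcalc
      _ = I ^ ((3 : ℝ) / 2) := hrpow
end

section
/- If a random variable X can be written as X = X₁ + X₂ with independent X₁, X₂ each having density with Fisher information at most I, then the density p of X satisfies |p'(x)| ≤ I^{3/4} √(p(x)) for all x, and p' has total variation ∫ |p''(x)| dx ≤ I. -/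
open MeasureTheory Real
open scoped ENNReal

set_option maxHeartbeats 1000000

private lemma fisher_aux (q q' : ℝ → ℝ) (I : ℝ)
    (hnn : ∀ x, 0 ≤ q x) (hint : Integrable q) (h1 : ∫ x, q x = 1)
    (hFTC : ∀ a b : ℝ, q b - q a = ∫ x in a..b, q' x)
    (hconv : ∀ x, q x = 0 → q' x = 0)
    (hIfin : IntegrableOn (fun x => (q' x) ^ 2 / q x) {x | 0 < q x})
    (hI : ∫ x in {x | 0 < q x}, (q' x) ^ 2 / q x ≤ I) :
    AEMeasurable (fun x => |q' x|) ∧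
    (∫⁻ x, ENNReal.ofReal |q' x| ≤ ENNReal.ofReal (Real.sqrt I)) ∧
    AEMeasurable (fun x => (q' x) ^ 2 / q x) ∧
    (∫⁻ x, ENNReal.ofReal ((q' x) ^ 2 / q x) ≤ ENNReal.ofReal I) ∧
    (∀ y, q y ≤ Real.sqrt I) := by
  have hI0 : 0 ≤ I :=
    le_trans (integral_nonneg fun x => div_nonneg (sq_nonneg _) (hnn x)) hI
  -- measurable representative of q
  have hw : AEMeasurable q := hint.1.aemeasurable
  set w := hw.mk q with hwdef
  have hqw : q =ᵐ[volume] w := hw.ae_eq_mk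
  set t : Set ℝ := {x | 0 < w x} with htdef
  have ht : MeasurableSet t := measurableSet_lt measurable_const hw.measurable_mk
  have hst : {x | 0 < q x} =ᵐ[volume] t := by
    filter_upwards [hqw] with x hx
    show (0 < q x) = (0 < w x)
    rw [hx]
  have hrt : volume.restrict {x | 0 < q x} = volume.restrict t :=
    Measure.restrict_congr_set hst
  have hIfin' : Integrable (fun x => (q' x) ^ 2 / q x) (volume.restrict t) := by
    rw [← hrt]; exact hIfin
  have hv : AEMeasurable (fun x => (q' x) ^ 2 / q x) (volume.restrict t) :=
    hIfin'.1.aemeasurable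
  set v := hv.mk _ with hvdef
  have hveq : (fun x => (q' x) ^ 2 / q x) =ᵐ[volume.restrict t] v := hv.ae_eq_mk
  have hvt : ∀ᵐ x, x ∈ t → (q' x) ^ 2 / q x = v x := (ae_restrict_iff' ht).1 hveq
  -- pointwise facts
  have hq0 : ∀ x, q x = w x → x ∉ t → q x = 0 := by
    intro x h1x hx
    exact le_antisymm (h1x ▸ not_lt.1 hx) (hnn x)
  have claim1 : (fun x => (q' x) ^ 2 / q x) =ᵐ[volume] t.indicator v := by
    filter_upwards [hqw, hvt] with x h1x h2x
    by_cases hx : x ∈ t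
    · rw [Set.indicator_of_mem hx, h2x hx]
    · rw [Set.indicator_of_notMem hx, hconv x (hq0 x h1x hx)]
      simp
  have item3 : AEMeasurable (fun x => (q' x) ^ 2 / q x) :=
    ((hv.measurable_mk.indicator ht).aemeasurable).congr claim1.symm
  have claim2 : (fun x => |q' x|)
      =ᵐ[volume] t.indicator (fun x => Real.sqrt (v x * w x)) := by
    filter_upwards [hqw, hvt] with x h1x h2x
    by_cases hx : x ∈ t
    · have hq : 0 < q x := h1x ▸ hx
      rw [Set.indicator_of_mem hx, ← h2x hx, ← h1x,
        div_mul_cancel₀ _ (ne_of_gt hq), Real.sqrt_sq_eq_abs]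
    · rw [Set.indicator_of_notMem hx, hconv x (hq0 x h1x hx), abs_zero]
  have item1 : AEMeasurable (fun x => |q' x|) :=
    (((hv.measurable_mk.mul hw.measurable_mk).sqrt.indicator ht).aemeasurable).congr claim2.symm
  -- the set integral as a lintegral
  have hsetI : ∫⁻ x in t, ENNReal.ofReal ((q' x) ^ 2 / q x) ≤ ENNReal.ofReal I := by
    rw [← ofReal_integral_eq_lintegral_ofReal hIfin'
      (Filter.Eventually.of_forall fun x => div_nonneg (sq_nonneg _) (hnn x))]
    exact ENNReal.ofReal_le_ofReal (le_of_eq_of_le (by rw [← hrt]) hI)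
  have item4 : ∫⁻ x, ENNReal.ofReal ((q' x) ^ 2 / q x) ≤ ENNReal.ofReal I := by
    calc ∫⁻ x, ENNReal.ofReal ((q' x) ^ 2 / q x)
        = ∫⁻ x, t.indicator (fun x => ENNReal.ofReal ((q' x) ^ 2 / q x)) x := by
          refine lintegral_congr_ae ?_
          filter_upwards [claim1, hvt] with x h1x h2x
          by_cases hx : x ∈ t
          · rw [Set.indicator_of_mem hx]
          · rw [Set.indicator_of_notMem hx, h1x, Set.indicator_of_notMem hx,
              ENNReal.ofReal_zero]
      _ = ∫⁻ x in t, ENNReal.ofReal ((q' x) ^ 2 / q x) := lintegral_indicator ht _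
      _ ≤ ENNReal.ofReal I := hsetI
  -- Cauchy-Schwarz bound on the L¹ norm of q'
  have h2conj : Real.HolderConjugate 2 2 := Real.HolderConjugate.two_two
  have hmf : Measurable fun x => (ENNReal.ofReal (v x)) ^ ((1:ℝ)/2) :=
    (ENNReal.measurable_ofReal.comp hv.measurable_mk).pow_const _
  have hmg : Measurable fun x => (ENNReal.ofReal (w x)) ^ ((1:ℝ)/2) :=
    (ENNReal.measurable_ofReal.comp hw.measurable_mk).pow_const _
  have cs := ENNReal.lintegral_mul_le_Lp_mul_Lq (volume.restrict t) h2conj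
    hmf.aemeasurable hmg.aemeasurable
  have hrpow2 : ∀ a : ℝ≥0∞, (a ^ ((1:ℝ)/2)) ^ (2:ℝ) = a := by
    intro a
    rw [← ENNReal.rpow_mul]
    norm_num
  have item2 : ∫⁻ x, ENNReal.ofReal |q' x| ≤ ENNReal.ofReal (Real.sqrt I) := by
    have e1 : ∫⁻ x, ENNReal.ofReal |q' x|
        = ∫⁻ x in t, ENNReal.ofReal |q' x| := by
      rw [← lintegral_indicator ht]
      refine lintegral_congr_ae ?_
      filter_upwards [claim2] with x h1x
      by_cases hx : x ∈ t
      · rw [Set.indicator_of_mem hx]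
      · rw [Set.indicator_of_notMem hx, h1x, Set.indicator_of_notMem hx,
          ENNReal.ofReal_zero]
    have e2 : ∫⁻ x in t, ENNReal.ofReal |q' x|
        = ∫⁻ x in t, ((ENNReal.ofReal (v x)) ^ ((1:ℝ)/2)
            * (ENNReal.ofReal (w x)) ^ ((1:ℝ)/2)) := by
      refine lintegral_congr_ae ?_
      filter_upwards [ae_restrict_of_ae claim2, ae_restrict_of_ae hqw,
        ae_restrict_mem ht, hveq] with x h1x h2x h3x h4x
      have hv0 : 0 ≤ v x := by rw [← h4x]; exact div_nonneg (sq_nonneg _) (hnn x)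
      have hw0 : 0 ≤ w x := le_of_lt h3x
      rw [h1x, Set.indicator_of_mem h3x, Real.sqrt_mul hv0,
        ENNReal.ofReal_mul (Real.sqrt_nonneg _), Real.sqrt_eq_rpow, Real.sqrt_eq_rpow,
        ENNReal.ofReal_rpow_of_nonneg hv0 (by norm_num),
        ENNReal.ofReal_rpow_of_nonneg hw0 (by norm_num)]
    have hA : ∫⁻ x in t, ENNReal.ofReal (v x) ≤ ENNReal.ofReal I := by
      refine le_trans (le_of_eq (lintegral_congr_ae ?_)) hsetI
      filter_upwards [hveq] with x hx
      rw [hx]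
    have hB : ∫⁻ x in t, ENNReal.ofReal (w x) ≤ ENNReal.ofReal 1 := by
      have : ∫⁻ x in t, ENNReal.ofReal (w x) = ∫⁻ x in t, ENNReal.ofReal (q x) := by
        refine lintegral_congr_ae ?_
        filter_upwards [ae_restrict_of_ae hqw] with x hx
        rw [hx]
      rw [this, ← h1, ofReal_integral_eq_lintegral_ofReal hint
        (Filter.Eventually.of_forall hnn)]
      exact setLIntegral_le_lintegral _ _
    calc ∫⁻ x, ENNReal.ofReal |q' x|
        = ∫⁻ x in t, ((ENNReal.ofReal (v x)) ^ ((1:ℝ)/2)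
            * (ENNReal.ofReal (w x)) ^ ((1:ℝ)/2)) := by rw [e1, e2]
      _ ≤ (∫⁻ x in t, ((ENNReal.ofReal (v x)) ^ ((1:ℝ)/2)) ^ (2:ℝ)) ^ ((1:ℝ)/2)
            * (∫⁻ x in t, ((ENNReal.ofReal (w x)) ^ ((1:ℝ)/2)) ^ (2:ℝ)) ^ ((1:ℝ)/2) := cs
      _ = (∫⁻ x in t, ENNReal.ofReal (v x)) ^ ((1:ℝ)/2)
            * (∫⁻ x in t, ENNReal.ofReal (w x)) ^ ((1:ℝ)/2) := by
          simp_rw [hrpow2]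
      _ ≤ (ENNReal.ofReal I) ^ ((1:ℝ)/2) * (ENNReal.ofReal 1) ^ ((1:ℝ)/2) := by
          exact mul_le_mul' (ENNReal.rpow_le_rpow hA (by norm_num))
            (ENNReal.rpow_le_rpow hB (by norm_num))
      _ = ENNReal.ofReal (Real.sqrt I) := by
          rw [ENNReal.ofReal_one, ENNReal.one_rpow, mul_one, Real.sqrt_eq_rpow,
            ENNReal.ofReal_rpow_of_nonneg hI0 (by norm_num)]
  -- integrability of |q'|
  have hq'int : Integrable (fun x => |q' x|) := by
    refine ⟨item1.aestronglyMeasurable, ?_⟩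
    rw [hasFiniteIntegral_iff_norm]
    calc ∫⁻ x, ENNReal.ofReal ‖|q' x|‖
        = ∫⁻ x, ENNReal.ofReal |q' x| := by
          refine lintegral_congr fun x => ?_
          rw [Real.norm_eq_abs, abs_abs]
      _ ≤ ENNReal.ofReal (Real.sqrt I) := item2
      _ < ⊤ := ENNReal.ofReal_lt_top
  have habs : ∫ x, |q' x| ≤ Real.sqrt I := by
    rw [integral_eq_lintegral_of_nonneg_ae (Filter.Eventually.of_forall fun x => abs_nonneg _)
      item1.aestronglyMeasurable]
    exact ENNReal.toReal_le_of_le_ofReal (Real.sqrt_nonneg _) item2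
  have item5 : ∀ y, q y ≤ Real.sqrt I := by
    intro y
    refine le_of_forall_pos_le_add fun ε hε => ?_
    obtain ⟨a, hay, hqa⟩ : ∃ a, a < y ∧ q a < ε := by
      by_contra hcon
      push_neg at hcon
      have hio : IntegrableOn q (Set.Iio y) volume := hint.integrableOn
      have hfi := hio.2
      rw [hasFiniteIntegral_iff_norm] at hfi
      refine absurd hfi (not_lt.2 ?_)
      calc (⊤:ℝ≥0∞) = ENNReal.ofReal ε * volume (Set.Iio y) := by
            rw [Real.volume_Iio, ENNReal.mul_top (ENNReal.ofReal_pos.2 hε).ne']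
        _ = ∫⁻ x in Set.Iio y, ENNReal.ofReal ε := (setLIntegral_const _ _).symm
        _ ≤ ∫⁻ x in Set.Iio y, ENNReal.ofReal ‖q x‖ := by
            refine setLIntegral_mono_ae (ENNReal.measurable_ofReal.comp_aemeasurable hint.1.norm.restrict.aemeasurable) ?_
            refine Filter.Eventually.of_forall fun x hx => ?_
            rw [Real.norm_eq_abs, abs_of_nonneg (hnn x)]
            exact ENNReal.ofReal_le_ofReal (hcon x hx)
    have h3 : q y = q a + ∫ x in a..y, q' x := by
      have := hFTC a y; linarith
    have h4 : |∫ x in a..y, q' x| ≤ ∫ x in a..y, |q' x| :=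
      intervalIntegral.abs_integral_le_integral_abs hay.le
    have h5 : ∫ x in a..y, |q' x| ≤ ∫ x, |q' x| := by
      rw [intervalIntegral.integral_of_le hay.le]
      exact setIntegral_le_integral hq'int
        (Filter.Eventually.of_forall fun x => abs_nonneg _)
    have := le_abs_self (∫ x in a..y, q' x)
    linarith [habs]
  exact ⟨item1, item2, item3, item4, item5⟩


private lemma fisher_part2
    (p₁' p₂' : ℝ → ℝ) (I : ℝ) (hI0 : 0 ≤ I)
    (m₁ : AEMeasurable (fun x => |p₁' x|) volume)
    (m₂ : AEMeasurable (fun x => |p₂' x|) volume)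
    (b₁ : ∫⁻ x, ENNReal.ofReal |p₁' x| ≤ ENNReal.ofReal (Real.sqrt I))
    (b₂ : ∫⁻ x, ENNReal.ofReal |p₂' x| ≤ ENNReal.ofReal (Real.sqrt I))
    (p'' : ℝ → ℝ)
    (hp'' : ∀ x, p'' x = ∫ y, p₁' (x - y) * p₂' y) :
    ∫ x, |p'' x| ≤ I := by
  have A : AEMeasurable (fun u => ENNReal.ofReal |p₁' u|) volume :=
    ENNReal.measurable_ofReal.comp_aemeasurable m₁
  have B : AEMeasurable (fun u => ENNReal.ofReal |p₂' u|) volume :=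
    ENNReal.measurable_ofReal.comp_aemeasurable m₂
  by_cases hmeas : Integrable (fun x => |p'' x|) volume
  · have step1 : ∀ x, ENNReal.ofReal |p'' x|
        ≤ ∫⁻ y, ENNReal.ofReal |p₁' (x - y)| * ENNReal.ofReal |p₂' y| := by
      intro x
      rw [hp'']
      calc ENNReal.ofReal |∫ y, p₁' (x - y) * p₂' y|
          = (‖∫ y, p₁' (x - y) * p₂' y‖₊ : ℝ≥0∞) := (Real.enorm_eq_ofReal_abs _).symm
        _ ≤ ∫⁻ y, (‖p₁' (x - y) * p₂' y‖₊ : ℝ≥0∞) := enorm_integral_le_lintegral_enorm _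
        _ = ∫⁻ y, ENNReal.ofReal |p₁' (x - y)| * ENNReal.ofReal |p₂' y| := by
            refine lintegral_congr fun y => ?_
            rw [nnnorm_mul, ENNReal.coe_mul, ← enorm_eq_nnnorm, ← enorm_eq_nnnorm,
              Real.enorm_eq_ofReal_abs, Real.enorm_eq_ofReal_abs]
    have meas2 : AEMeasurable
        (fun z : ℝ × ℝ => ENNReal.ofReal |p₁' (z.1 - z.2)| * ENNReal.ofReal |p₂' z.2|)
        (volume.prod volume) := by
      have hS : MeasurePreserving (fun z : ℝ × ℝ => (z.1 - z.2, z.2))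
          ((volume : Measure ℝ).prod volume) ((volume : Measure ℝ).prod volume) :=
        measurePreserving_sub_prod volume volume
      exact (A.comp_fst.comp_quasiMeasurePreserving hS.quasiMeasurePreserving).mul B.comp_snd
    have key : ∫⁻ x, ENNReal.ofReal |p'' x| ≤ ENNReal.ofReal I := by
      calc ∫⁻ x, ENNReal.ofReal |p'' x|
          ≤ ∫⁻ x, ∫⁻ y, ENNReal.ofReal |p₁' (x - y)| * ENNReal.ofReal |p₂' y| :=
            lintegral_mono step1
        _ = ∫⁻ y, ∫⁻ x, ENNReal.ofReal |p₁' (x - y)| * ENNReal.ofReal |p₂' y| :=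
            lintegral_lintegral_swap meas2
        _ = ∫⁻ y, (∫⁻ x, ENNReal.ofReal |p₁' (x - y)|) * ENNReal.ofReal |p₂' y| := by
            refine lintegral_congr fun y => ?_
            exact lintegral_mul_const'' _
              (A.comp_quasiMeasurePreserving
                (measurePreserving_sub_right volume y).quasiMeasurePreserving)
        _ = ∫⁻ y, (∫⁻ u, ENNReal.ofReal |p₁' u|) * ENNReal.ofReal |p₂' y| := by
            refine lintegral_congr fun y => ?_
            have h : ∫⁻ u, ENNReal.ofReal |p₁' u| = ∫⁻ x, ENNReal.ofReal |p₁' (x - y)| := by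
              conv_lhs => rw [← (measurePreserving_sub_right volume y).map_eq]
              exact lintegral_map' (by
                rw [(measurePreserving_sub_right volume y).map_eq]; exact A)
                (measurable_sub_const y).aemeasurable
            rw [h]
        _ ≤ ∫⁻ y, ENNReal.ofReal (Real.sqrt I) * ENNReal.ofReal |p₂' y| := by
            refine lintegral_mono fun y => mul_le_mul' b₁ le_rfl
        _ = ENNReal.ofReal (Real.sqrt I) * ∫⁻ y, ENNReal.ofReal |p₂' y| :=
            lintegral_const_mul'' _ B
        _ ≤ ENNReal.ofReal (Real.sqrt I) * ENNReal.ofReal (Real.sqrt I) :=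
            mul_le_mul' le_rfl b₂
        _ = ENNReal.ofReal I := by
            rw [← ENNReal.ofReal_mul (Real.sqrt_nonneg _), Real.mul_self_sqrt hI0]
    rw [← ofReal_integral_eq_lintegral_ofReal hmeas
      (Filter.Eventually.of_forall fun x => abs_nonneg _)] at key
    exact (ENNReal.ofReal_le_ofReal_iff hI0).1 key
  · rw [integral_undef hmeas]
    exact hI0


private lemma fisher_part1
    (p₁ p₂ p₁' : ℝ → ℝ) (I : ℝ) (hI0 : 0 ≤ I)
    (hnn₁ : ∀ x, 0 ≤ p₁ x) (hnn₂ : ∀ x, 0 ≤ p₂ x)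
    (hint₁ : Integrable p₁) (hint₂ : Integrable p₂)
    (hconv₁ : ∀ x, p₁ x = 0 → p₁' x = 0)
    (m₁ : AEMeasurable (fun x => |p₁' x|) volume)
    (m₁' : AEMeasurable (fun x => (p₁' x) ^ 2 / p₁ x) volume)
    (b₁' : ∫⁻ x, ENNReal.ofReal ((p₁' x) ^ 2 / p₁ x) ≤ ENNReal.ofReal I)
    (s₁ : ∀ y, p₁ y ≤ Real.sqrt I) (s₂ : ∀ y, p₂ y ≤ Real.sqrt I)
    (p p' : ℝ → ℝ)
    (hp : ∀ x, p x = ∫ y, p₁ (x - y) * p₂ y)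
    (hp' : ∀ x, p' x = ∫ y, p₁' (x - y) * p₂ y)
    (x : ℝ) : |p' x| ≤ I ^ ((3 : ℝ) / 4) * Real.sqrt (p x) := by
  have hpx0 : 0 ≤ p x := by
    rw [hp]; exact integral_nonneg fun y => mul_nonneg (hnn₁ _) (hnn₂ _)
  set u : ℝ → ℝ≥0∞ := fun z => ENNReal.ofReal ((p₁' z) ^ 2 / p₁ z) with hu_def
  have hu : AEMeasurable u volume := ENNReal.measurable_ofReal.comp_aemeasurable m₁'
  have mp : MeasurePreserving (fun y : ℝ => x - y) volume volume :=
    Measure.measurePreserving_sub_left volume x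
  have hP₂ : AEMeasurable (fun y => ENNReal.ofReal (p₂ y)) volume :=
    ENNReal.measurable_ofReal.comp_aemeasurable hint₂.1.aemeasurable
  have hP₁x : AEMeasurable (fun y => ENNReal.ofReal (p₁ (x - y))) volume :=
    (ENNReal.measurable_ofReal.comp_aemeasurable hint₁.1.aemeasurable).comp_quasiMeasurePreserving
      mp.quasiMeasurePreserving
  have hux : AEMeasurable (fun y => u (x - y)) volume :=
    hu.comp_quasiMeasurePreserving mp.quasiMeasurePreserving
  -- step 0 : bound |p' x| by a lintegral
  have step0 : ENNReal.ofReal |p' x|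
      ≤ ∫⁻ y, ENNReal.ofReal |p₁' (x - y)| * ENNReal.ofReal (p₂ y) := by
    rw [hp']
    calc ENNReal.ofReal |∫ y, p₁' (x - y) * p₂ y|
        = (‖∫ y, p₁' (x - y) * p₂ y‖₊ : ℝ≥0∞) := (Real.enorm_eq_ofReal_abs _).symm
      _ ≤ ∫⁻ y, (‖p₁' (x - y) * p₂ y‖₊ : ℝ≥0∞) := enorm_integral_le_lintegral_enorm _
      _ = ∫⁻ y, ENNReal.ofReal |p₁' (x - y)| * ENNReal.ofReal (p₂ y) := by
          refine lintegral_congr fun y => ?_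
          rw [nnnorm_mul, ENNReal.coe_mul, ← enorm_eq_nnnorm, ← enorm_eq_nnnorm,
            Real.enorm_eq_ofReal_abs, Real.enorm_eq_ofReal_abs, abs_of_nonneg (hnn₂ y)]
  -- pointwise Cauchy-Schwarz factorization
  have hpt : ∀ y, ENNReal.ofReal |p₁' (x - y)| * ENNReal.ofReal (p₂ y)
      ≤ (u (x - y) * ENNReal.ofReal (p₂ y)) ^ ((1:ℝ)/2)
        * ((ENNReal.ofReal (p₁ (x - y)) * ENNReal.ofReal (p₂ y)) ^ ((1:ℝ)/2)) := by
    intro y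
    set z := x - y
    by_cases hz : p₁ z = 0
    · rw [hconv₁ z hz, abs_zero, ENNReal.ofReal_zero, zero_mul]
      exact zero_le
    · have hz' : 0 < p₁ z := lt_of_le_of_ne (hnn₁ z) (Ne.symm hz)
      refine le_of_eq ?_
      have e1 : (u z * ENNReal.ofReal (p₂ y)) ^ ((1:ℝ)/2)
          * ((ENNReal.ofReal (p₁ z) * ENNReal.ofReal (p₂ y)) ^ ((1:ℝ)/2))
          = (u z * ENNReal.ofReal (p₁ z)) ^ ((1:ℝ)/2)
            * ((ENNReal.ofReal (p₂ y) * ENNReal.ofReal (p₂ y)) ^ ((1:ℝ)/2)) := by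
        rw [← ENNReal.mul_rpow_of_nonneg _ _ (by norm_num : (0:ℝ) ≤ 1/2),
          ← ENNReal.mul_rpow_of_nonneg _ _ (by norm_num : (0:ℝ) ≤ 1/2),
          mul_mul_mul_comm]
      have e2 : u z * ENNReal.ofReal (p₁ z) = ENNReal.ofReal ((p₁' z) ^ 2) := by
        rw [hu_def, ← ENNReal.ofReal_mul (div_nonneg (sq_nonneg _) (hnn₁ z)),
          div_mul_cancel₀ _ hz]
      have e3 : (ENNReal.ofReal ((p₁' z) ^ 2)) ^ ((1:ℝ)/2) = ENNReal.ofReal |p₁' z| := by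
        rw [← Real.sqrt_sq_eq_abs, Real.sqrt_eq_rpow,
          ENNReal.ofReal_rpow_of_nonneg (sq_nonneg _) (by norm_num : (0:ℝ) ≤ 1/2)]
      have e4 : (ENNReal.ofReal (p₂ y) * ENNReal.ofReal (p₂ y)) ^ ((1:ℝ)/2)
          = ENNReal.ofReal (p₂ y) := by
        conv_rhs => rw [← Real.sqrt_mul_self (hnn₂ y)]
        rw [Real.sqrt_eq_rpow, ← ENNReal.ofReal_mul (hnn₂ y),
          ENNReal.ofReal_rpow_of_nonneg (mul_nonneg (hnn₂ y) (hnn₂ y)) (by norm_num : (0:ℝ) ≤ 1/2)]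
      rw [e1, e2, e3, e4]
  -- Cauchy-Schwarz
  have h2conj : Real.HolderConjugate 2 2 := Real.HolderConjugate.two_two
  have hrpow2 : ∀ a : ℝ≥0∞, (a ^ ((1:ℝ)/2)) ^ (2:ℝ) = a := by
    intro a
    rw [← ENNReal.rpow_mul]
    norm_num
  have hf : AEMeasurable (fun y => (u (x - y) * ENNReal.ofReal (p₂ y)) ^ ((1:ℝ)/2)) volume :=
    (hux.mul hP₂).pow_const _
  have hg : AEMeasurable
      (fun y => (ENNReal.ofReal (p₁ (x - y)) * ENNReal.ofReal (p₂ y)) ^ ((1:ℝ)/2)) volume :=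
    (hP₁x.mul hP₂).pow_const _
  have cs := ENNReal.lintegral_mul_le_Lp_mul_Lq (volume : Measure ℝ) h2conj hf hg
  simp only [Pi.mul_apply] at cs
  simp_rw [hrpow2] at cs
  -- factor 1
  have factor1 : ∫⁻ y, u (x - y) * ENNReal.ofReal (p₂ y)
      ≤ ENNReal.ofReal I * ENNReal.ofReal (Real.sqrt I) := by
    calc ∫⁻ y, u (x - y) * ENNReal.ofReal (p₂ y)
        ≤ ∫⁻ y, u (x - y) * ENNReal.ofReal (Real.sqrt I) :=
          lintegral_mono fun y => mul_le_mul' le_rfl (ENNReal.ofReal_le_ofReal (s₂ y))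
      _ = (∫⁻ y, u (x - y)) * ENNReal.ofReal (Real.sqrt I) := lintegral_mul_const'' _ hux
      _ ≤ ENNReal.ofReal I * ENNReal.ofReal (Real.sqrt I) := by
          refine mul_le_mul' ?_ le_rfl
          have h : ∫⁻ w, u w = ∫⁻ y, u (x - y) := by
            conv_lhs => rw [← mp.map_eq]
            exact lintegral_map' (by rw [mp.map_eq]; exact hu) mp.measurable.aemeasurable
          rw [← h]
          exact b₁'
  -- factor 2
  have hconvint : Integrable (fun y => p₁ (x - y) * p₂ y) := by
    refine Integrable.mono (hint₂.const_mul (Real.sqrt I)) ?_ ?_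
    · exact ((hint₁.1.aemeasurable.comp_quasiMeasurePreserving
        mp.quasiMeasurePreserving).mul hint₂.1.aemeasurable).aestronglyMeasurable
    · refine Filter.Eventually.of_forall fun y => ?_
      rw [Real.norm_eq_abs, Real.norm_eq_abs, abs_of_nonneg (mul_nonneg (hnn₁ _) (hnn₂ _)),
        abs_of_nonneg (mul_nonneg (Real.sqrt_nonneg _) (hnn₂ _))]
      exact mul_le_mul_of_nonneg_right (s₁ (x - y)) (hnn₂ y)
  have factor2 : ∫⁻ y, ENNReal.ofReal (p₁ (x - y)) * ENNReal.ofReal (p₂ y)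
      = ENNReal.ofReal (p x) := by
    calc ∫⁻ y, ENNReal.ofReal (p₁ (x - y)) * ENNReal.ofReal (p₂ y)
        = ∫⁻ y, ENNReal.ofReal (p₁ (x - y) * p₂ y) := by
          refine lintegral_congr fun y => ?_
          rw [ENNReal.ofReal_mul (hnn₁ _)]
      _ = ENNReal.ofReal (∫ y, p₁ (x - y) * p₂ y) :=
          (ofReal_integral_eq_lintegral_ofReal hconvint
            (Filter.Eventually.of_forall fun y => mul_nonneg (hnn₁ _) (hnn₂ _))).symm
      _ = ENNReal.ofReal (p x) := by rw [hp]
  -- combine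
  have final : ENNReal.ofReal |p' x| ≤ ENNReal.ofReal (I ^ ((3:ℝ)/4) * Real.sqrt (p x)) := by
    calc ENNReal.ofReal |p' x|
        ≤ ∫⁻ y, ENNReal.ofReal |p₁' (x - y)| * ENNReal.ofReal (p₂ y) := step0
      _ ≤ ∫⁻ y, (u (x - y) * ENNReal.ofReal (p₂ y)) ^ ((1:ℝ)/2)
            * ((ENNReal.ofReal (p₁ (x - y)) * ENNReal.ofReal (p₂ y)) ^ ((1:ℝ)/2)) :=
          lintegral_mono hpt
      _ ≤ (∫⁻ y, u (x - y) * ENNReal.ofReal (p₂ y)) ^ ((1:ℝ)/2)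
            * (∫⁻ y, ENNReal.ofReal (p₁ (x - y)) * ENNReal.ofReal (p₂ y)) ^ ((1:ℝ)/2) := cs
      _ ≤ (ENNReal.ofReal I * ENNReal.ofReal (Real.sqrt I)) ^ ((1:ℝ)/2)
            * (ENNReal.ofReal (p x)) ^ ((1:ℝ)/2) := by
          rw [factor2]
          exact mul_le_mul' (ENNReal.rpow_le_rpow factor1 (by norm_num)) le_rfl
      _ = ENNReal.ofReal (I ^ ((3:ℝ)/4) * Real.sqrt (p x)) := by
          rw [← ENNReal.ofReal_mul hI0,
            ENNReal.ofReal_rpow_of_nonneg (mul_nonneg hI0 (Real.sqrt_nonneg _)) (by norm_num),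
            ENNReal.ofReal_rpow_of_nonneg hpx0 (by norm_num), ← ENNReal.ofReal_mul
              (Real.rpow_nonneg (mul_nonneg hI0 (Real.sqrt_nonneg _)) _)]
          congr 2
          · rw [Real.sqrt_eq_rpow I,
              show I * I ^ ((1:ℝ)/2) = I ^ ((3:ℝ)/2) by
                rw [show (3:ℝ)/2 = 1 + 1/2 by norm_num,
                  Real.rpow_add' hI0 (by norm_num), Real.rpow_one],
              ← Real.rpow_mul hI0]
            norm_num
          · rw [← Real.sqrt_eq_rpow]
  have := (ENNReal.ofReal_le_ofReal_iff
    (mul_nonneg (Real.rpow_nonneg hI0 _) (Real.sqrt_nonneg _))).1 final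
  exact this


/-- If `X = X₁ + X₂` with independent `X₁, X₂` having densities `p₁, p₂` with Fisher
information at most `I`, then the density `p = p₁ * p₂` (convolution) of `X` satisfies
`|p'(x)| ≤ I^{3/4} √(p(x))` for all `x`, and `p'` has total variation `∫ |p''| ≤ I`,
where `p' = p₁' ⋆ p₂` and `p'' = p₁' ⋆ p₂'`. -/
theorem convolution_two_fisher_bounds
    (p₁ p₂ p₁' p₂' : ℝ → ℝ) (I : ℝ)
    (hnn₁ : ∀ x, 0 ≤ p₁ x) (hint₁ : Integrable p₁) (h1₁ : ∫ x, p₁ x = 1)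
    (hnn₂ : ∀ x, 0 ≤ p₂ x) (hint₂ : Integrable p₂) (h1₂ : ∫ x, p₂ x = 1)
    (hFTC₁ : ∀ a b : ℝ, p₁ b - p₁ a = ∫ x in a..b, p₁' x)
    (hFTC₂ : ∀ a b : ℝ, p₂ b - p₂ a = ∫ x in a..b, p₂' x)
    (hconv₁ : ∀ x, p₁ x = 0 → p₁' x = 0)
    (hconv₂ : ∀ x, p₂ x = 0 → p₂' x = 0)
    (hI₁fin : IntegrableOn (fun x => (p₁' x) ^ 2 / p₁ x) {x | 0 < p₁ x})
    (hI₂fin : IntegrableOn (fun x => (p₂' x) ^ 2 / p₂ x) {x | 0 < p₂ x})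
    (hI₁ : ∫ x in {x | 0 < p₁ x}, (p₁' x) ^ 2 / p₁ x ≤ I)
    (hI₂ : ∫ x in {x | 0 < p₂ x}, (p₂' x) ^ 2 / p₂ x ≤ I)
    (p p' p'' : ℝ → ℝ)
    (hp : ∀ x, p x = ∫ y, p₁ (x - y) * p₂ y)
    (hp' : ∀ x, p' x = ∫ y, p₁' (x - y) * p₂ y)
    (hp'' : ∀ x, p'' x = ∫ y, p₁' (x - y) * p₂' y) :
    (∀ x, |p' x| ≤ I ^ ((3 : ℝ) / 4) * Real.sqrt (p x)) ∧
      ∫ x, |p'' x| ≤ I := by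
  have hI0 : 0 ≤ I :=
    le_trans (integral_nonneg fun x => div_nonneg (sq_nonneg _) (hnn₁ x)) hI₁
  obtain ⟨m₁, b₁, m₁', b₁', s₁⟩ :=
    fisher_aux p₁ p₁' I hnn₁ hint₁ h1₁ hFTC₁ hconv₁ hI₁fin hI₁
  obtain ⟨m₂, b₂, m₂', b₂', s₂⟩ :=
    fisher_aux p₂ p₂' I hnn₂ hint₂ h1₂ hFTC₂ hconv₂ hI₂fin hI₂
  constructor
  · exact fun x => fisher_part1 p₁ p₂ p₁' I hI0 hnn₁ hnn₂ hint₁ hint₂ hconv₁ m₁ m₁' b₁' s₁ s₂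
      p p' hp hp' x
  · exact fisher_part2 p₁' p₂' I hI0 m₁ m₂ b₁ b₂ p'' hp''
end

section
/- If X is a sum of three independent random variables each having density with Fisher information at most I, then the density p of X satisfies |p''(x)| ≤ I^{5/4} √(p(x)) for all x. -/
open MeasureTheory Real

lemma my_cs {f g : ℝ → ℝ} (hfnn : ∀ x, 0 ≤ f x) (hgnn : ∀ x, 0 ≤ g x)
    (hfm : AEStronglyMeasurable f volume) (hgm : AEStronglyMeasurable g volume)
    (hf2 : Integrable (fun x => f x ^ 2)) (hg2 : Integrable (fun x => g x ^ 2)) :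
    ∫ x, f x * g x ≤ Real.sqrt (∫ x, f x ^ 2) * Real.sqrt (∫ x, g x ^ 2) := by
  have hpq : Real.HolderConjugate 2 2 := Real.holderConjugate_iff.mpr ⟨one_lt_two, by norm_num⟩
  have hf : MemLp f (ENNReal.ofReal 2) volume := by
    rw [ENNReal.ofReal_ofNat]; exact (memLp_two_iff_integrable_sq hfm).2 hf2
  have hg : MemLp g (ENNReal.ofReal 2) volume := by
    rw [ENNReal.ofReal_ofNat]; exact (memLp_two_iff_integrable_sq hgm).2 hg2
  have h := integral_mul_le_Lp_mul_Lq_of_nonneg hpq (Filter.Eventually.of_forall hfnn)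
    (Filter.Eventually.of_forall hgnn) hf hg
  have e : ∀ F : ℝ → ℝ, (∫ a, F a ^ (2 : ℝ)) = ∫ a, F a ^ 2 := fun F =>
    integral_congr_ae (Filter.Eventually.of_forall fun a => by
      show F a ^ (2 : ℝ) = F a ^ 2
      rw [show (2 : ℝ) = ((2 : ℕ) : ℝ) by norm_num, Real.rpow_natCast])
  rw [e, e] at h
  rw [Real.sqrt_eq_rpow, Real.sqrt_eq_rpow]
  exact h

lemma my_cs' {F G : ℝ → ℝ} (hF : ∀ x, 0 ≤ F x) (hG : ∀ x, 0 ≤ G x)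
    (hFint : Integrable F) (hGint : Integrable G) :
    ∫ x, Real.sqrt (F x) * Real.sqrt (G x) ≤ Real.sqrt (∫ x, F x) * Real.sqrt (∫ x, G x) := by
  have hFm : AEStronglyMeasurable (fun x => Real.sqrt (F x)) volume :=
    Real.continuous_sqrt.comp_aestronglyMeasurable hFint.aestronglyMeasurable
  have hGm : AEStronglyMeasurable (fun x => Real.sqrt (G x)) volume :=
    Real.continuous_sqrt.comp_aestronglyMeasurable hGint.aestronglyMeasurable
  have eF : (fun x => Real.sqrt (F x) ^ 2) = F := funext fun x => Real.sq_sqrt (hF x)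
  have eG : (fun x => Real.sqrt (G x) ^ 2) = G := funext fun x => Real.sq_sqrt (hG x)
  have h := my_cs (fun x => Real.sqrt_nonneg _) (fun x => Real.sqrt_nonneg _) hFm hGm
    (by rw [eF]; exact hFint) (by rw [eG]; exact hGint)
  rw [eF, eG] at h
  exact h

lemma my_sqrt_mul_int {F G : ℝ → ℝ} (hFint : Integrable F) (hGint : Integrable G) :
    Integrable (fun x => Real.sqrt (F x) * Real.sqrt (G x)) := by
  have hFm : AEStronglyMeasurable (fun x => Real.sqrt (F x)) volume :=
    Real.continuous_sqrt.comp_aestronglyMeasurable hFint.aestronglyMeasurable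
  have hGm : AEStronglyMeasurable (fun x => Real.sqrt (G x)) volume :=
    Real.continuous_sqrt.comp_aestronglyMeasurable hGint.aestronglyMeasurable
  have hbd : Integrable (fun x => (|F x| + |G x|) / 2) := (hFint.abs.add hGint.abs).div_const 2
  refine hbd.mono' (hFm.mul hGm) (Filter.Eventually.of_forall fun x => ?_)
  have h1 : Real.sqrt (F x) ^ 2 ≤ |F x| := by
    rcases le_or_gt 0 (F x) with h | h
    · rw [Real.sq_sqrt h, abs_of_nonneg h]
    · rw [Real.sqrt_eq_zero_of_nonpos h.le]; simp [abs_nonneg]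
  have h2 : Real.sqrt (G x) ^ 2 ≤ |G x| := by
    rcases le_or_gt 0 (G x) with h | h
    · rw [Real.sq_sqrt h, abs_of_nonneg h]
    · rw [Real.sqrt_eq_zero_of_nonpos h.le]; simp [abs_nonneg]
  have h3 : ‖Real.sqrt (F x) * Real.sqrt (G x)‖ = Real.sqrt (F x) * Real.sqrt (G x) := by
    rw [Real.norm_eq_abs, abs_of_nonneg (mul_nonneg (Real.sqrt_nonneg _) (Real.sqrt_nonneg _))]
  rw [h3]
  nlinarith [sq_nonneg (Real.sqrt (F x) - Real.sqrt (G x)), Real.sqrt_nonneg (F x),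
    Real.sqrt_nonneg (G x)]

lemma my_ptwise {q q' : ℝ → ℝ} (hnn : ∀ x, 0 ≤ q x) (hconv : ∀ x, q x = 0 → q' x = 0) (x : ℝ) :
    |q' x| = Real.sqrt (q' x ^ 2 / q x) * Real.sqrt (q x) := by
  rcases eq_or_lt_of_le (hnn x) with h | h
  · rw [hconv x h.symm, ← h]
    simp
  · rw [← Real.sqrt_mul (div_nonneg (sq_nonneg _) (hnn x)), div_mul_cancel₀ _ h.ne',
      Real.sqrt_sq_eq_abs]

lemma my_fisher_global {q q' : ℝ → ℝ} {I : ℝ} (hnn : ∀ x, 0 ≤ q x) (hint : Integrable q)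
    (hconv : ∀ x, q x = 0 → q' x = 0)
    (hfin : IntegrableOn (fun x => q' x ^ 2 / q x) {x | 0 < q x})
    (hle : ∫ x in {x | 0 < q x}, q' x ^ 2 / q x ≤ I) :
    Integrable (fun x => q' x ^ 2 / q x) ∧ (∫ x, q' x ^ 2 / q x) ≤ I := by
  have hqm := hint.aestronglyMeasurable
  have hq_eq : q =ᵐ[volume] hqm.mk q := hqm.ae_eq_mk
  set T : Set ℝ := {x | 0 < hqm.mk q x} with hTdef
  have hT : MeasurableSet T :=
    measurableSet_lt measurable_const hqm.stronglyMeasurable_mk.measurable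
  have hST : {x | 0 < q x} =ᵐ[volume] T := by
    filter_upwards [hq_eq] with x hx
    change (0 < q x) = (0 < hqm.mk q x)
    rw [hx]
  have hres : volume.restrict {x | 0 < q x} = volume.restrict T :=
    Measure.restrict_congr_set hST
  have hIT : IntegrableOn (fun x => q' x ^ 2 / q x) T := by
    unfold IntegrableOn
    rw [← hres]
    exact hfin
  have hind : (fun x => q' x ^ 2 / q x) =ᵐ[volume] T.indicator (fun x => q' x ^ 2 / q x) := by
    filter_upwards [hq_eq] with x hx
    by_cases hxT : x ∈ T
    · rw [Set.indicator_of_mem hxT]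
    · rw [Set.indicator_of_notMem hxT]
      have hq0 : q x = 0 := le_antisymm (by rw [hx]; exact not_lt.1 hxT) (hnn x)
      simp [hconv x hq0]
  constructor
  · exact ((integrable_indicator_iff hT).2 hIT).congr hind.symm
  · calc ∫ x, q' x ^ 2 / q x = ∫ x, T.indicator (fun x => q' x ^ 2 / q x) x :=
          integral_congr_ae hind
      _ = ∫ x in T, q' x ^ 2 / q x := integral_indicator hT
      _ = ∫ x in {x | 0 < q x}, q' x ^ 2 / q x := by rw [hres]
      _ ≤ I := hle

lemma my_conv_int {f g : ℝ → ℝ} (hf : Integrable f) (hg : Integrable g) :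
    Integrable (fun y => ∫ z, f (y - z) * g z) := by
  have : (fun y => ∫ z, f (y - z) * g z)
      = convolution g f (ContinuousLinearMap.mul ℝ ℝ) volume := by
    funext y
    rw [convolution_def]
    exact integral_congr_ae (Filter.Eventually.of_forall fun z => by simp [mul_comm])
  rw [this]
  exact hg.integrable_convolution _ hf

lemma my_sqrt_five {I : ℝ} (hI : 0 ≤ I) :
    Real.sqrt (Real.sqrt I * I * I) = I ^ ((5 : ℝ) / 4) := by
  rcases eq_or_lt_of_le hI with h | h
  · rw [← h]
    rw [Real.zero_rpow (by norm_num : (5 : ℝ) / 4 ≠ 0)]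
    simp
  · have h1 : Real.sqrt I * I * I = I ^ ((5 : ℝ) / 2) := by
      rw [Real.sqrt_eq_rpow, show (5 : ℝ) / 2 = 1 / 2 + 1 + 1 by norm_num, Real.rpow_add h,
        Real.rpow_add h, Real.rpow_one]
    rw [h1, Real.sqrt_eq_rpow, ← Real.rpow_mul hI]
    norm_num

lemma my_density_le_sqrt {q q' : ℝ → ℝ} {I : ℝ} (hnn : ∀ x, 0 ≤ q x) (hint : Integrable q)
    (h1 : ∫ x, q x = 1) (hFTC : ∀ a b : ℝ, q b - q a = ∫ x in a..b, q' x)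
    (hconv : ∀ x, q x = 0 → q' x = 0)
    (hfin : IntegrableOn (fun x => q' x ^ 2 / q x) {x | 0 < q x})
    (hle : ∫ x in {x | 0 < q x}, q' x ^ 2 / q x ≤ I) :
    ∀ b, q b ≤ Real.sqrt I := by
  obtain ⟨hhint, hhle⟩ := my_fisher_global hnn hint hconv hfin hle
  have hhnn : ∀ x, 0 ≤ q' x ^ 2 / q x := fun x => div_nonneg (sq_nonneg _) (hnn x)
  have habs_eq : (fun x => |q' x|) =
      fun x => Real.sqrt (q' x ^ 2 / q x) * Real.sqrt (q x) :=
    funext (my_ptwise hnn hconv)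
  have habs_int : Integrable (fun x => |q' x|) := by
    rw [habs_eq]; exact my_sqrt_mul_int hhint hint
  have hTV : (∫ x, |q' x|) ≤ Real.sqrt I := by
    rw [habs_eq]
    calc (∫ x, Real.sqrt (q' x ^ 2 / q x) * Real.sqrt (q x))
        ≤ Real.sqrt (∫ x, q' x ^ 2 / q x) * Real.sqrt (∫ x, q x) :=
          my_cs' hhnn hnn hhint hint
      _ ≤ Real.sqrt I * 1 := by
          rw [h1, Real.sqrt_one]
          exact mul_le_mul_of_nonneg_right (Real.sqrt_le_sqrt hhle) zero_le_one
      _ = Real.sqrt I := mul_one _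
  intro b
  refine le_of_forall_pos_le_add fun ε hε => ?_
  have hsmall : ∃ a ≤ b, q a < ε := by
    by_contra hcon
    push_neg at hcon
    have hind : Integrable ((Set.Iic b).indicator (fun _ => ε)) := by
      refine hint.mono'
        ((stronglyMeasurable_const.indicator measurableSet_Iic).aestronglyMeasurable)
        (Filter.Eventually.of_forall fun x => ?_)
      by_cases hx : x ∈ Set.Iic b
      · rw [Set.indicator_of_mem hx, Real.norm_eq_abs, abs_of_nonneg hε.le]
        exact hcon x hx
      · rw [Set.indicator_of_notMem hx]
        simpa using hnn x
    rw [integrable_indicator_iff measurableSet_Iic, integrableOn_const_iff] at hind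
    rcases hind with h | h
    · exact hε.ne' (enorm_eq_zero.1 h)
    · rw [Real.volume_Iic] at h
      exact (lt_irrefl _ h).elim
  obtain ⟨a, hab, haε⟩ := hsmall
  have hFTCab := hFTC a b
  have hbound : q b - q a ≤ ∫ x, |q' x| := by
    rw [hFTCab, intervalIntegral.integral_of_le hab]
    calc ∫ x in Set.Ioc a b, q' x ≤ |∫ x in Set.Ioc a b, q' x| := le_abs_self _
      _ ≤ ∫ x in Set.Ioc a b, |q' x| := by
          simpa [Real.norm_eq_abs] using
            norm_integral_le_integral_norm (μ := volume.restrict (Set.Ioc a b)) q'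
      _ ≤ ∫ x, |q' x| := setIntegral_le_integral habs_int
            (Filter.Eventually.of_forall fun x => abs_nonneg _)
  have := hnn a
  linarith

/-- If `X = X₁ + X₂ + X₃` with independent summands whose densities `p₁, p₂, p₃` have
Fisher information at most `I`, then the density `p = p₁ ⋆ p₂ ⋆ p₃` of `X` satisfies
`|p''(x)| ≤ I^{5/4} √(p(x))` for all `x`. Here `r = p₂ ⋆ p₃`, `r' = p₂' ⋆ p₃` and
`p'' = p₁' ⋆ r'`. -/
theorem convolution_three_second_deriv_bound
    (p₁ p₂ p₃ p₁' p₂' p₃' : ℝ → ℝ) (I : ℝ)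
    (hnn₁ : ∀ x, 0 ≤ p₁ x) (hint₁ : Integrable p₁) (h1₁ : ∫ x, p₁ x = 1)
    (hnn₂ : ∀ x, 0 ≤ p₂ x) (hint₂ : Integrable p₂) (h1₂ : ∫ x, p₂ x = 1)
    (hnn₃ : ∀ x, 0 ≤ p₃ x) (hint₃ : Integrable p₃) (h1₃ : ∫ x, p₃ x = 1)
    (hFTC₁ : ∀ a b : ℝ, p₁ b - p₁ a = ∫ x in a..b, p₁' x)
    (hFTC₂ : ∀ a b : ℝ, p₂ b - p₂ a = ∫ x in a..b, p₂' x)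
    (hFTC₃ : ∀ a b : ℝ, p₃ b - p₃ a = ∫ x in a..b, p₃' x)
    (hconv₁ : ∀ x, p₁ x = 0 → p₁' x = 0)
    (hconv₂ : ∀ x, p₂ x = 0 → p₂' x = 0)
    (hconv₃ : ∀ x, p₃ x = 0 → p₃' x = 0)
    (hI₁fin : IntegrableOn (fun x => (p₁' x) ^ 2 / p₁ x) {x | 0 < p₁ x})
    (hI₂fin : IntegrableOn (fun x => (p₂' x) ^ 2 / p₂ x) {x | 0 < p₂ x})
    (hI₃fin : IntegrableOn (fun x => (p₃' x) ^ 2 / p₃ x) {x | 0 < p₃ x})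
    (hI₁ : ∫ x in {x | 0 < p₁ x}, (p₁' x) ^ 2 / p₁ x ≤ I)
    (hI₂ : ∫ x in {x | 0 < p₂ x}, (p₂' x) ^ 2 / p₂ x ≤ I)
    (hI₃ : ∫ x in {x | 0 < p₃ x}, (p₃' x) ^ 2 / p₃ x ≤ I)
    (r r' p p'' : ℝ → ℝ)
    (hr : ∀ x, r x = ∫ z, p₂ (x - z) * p₃ z)
    (hr' : ∀ x, r' x = ∫ z, p₂' (x - z) * p₃ z)
    (hp : ∀ x, p x = ∫ y, p₁ (x - y) * r y)
    (hp'' : ∀ x, p'' x = ∫ y, p₁' (x - y) * r' y) :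
    ∀ x, |p'' x| ≤ I ^ ((5 : ℝ) / 4) * Real.sqrt (p x) := by
  intro x
  have hI0 : 0 ≤ I :=
    le_trans (integral_nonneg fun u => div_nonneg (sq_nonneg _) (hnn₁ u)) hI₁
  have hs0 : 0 ≤ Real.sqrt I := Real.sqrt_nonneg I
  obtain ⟨hh₁int, hh₁le⟩ := my_fisher_global hnn₁ hint₁ hconv₁ hI₁fin hI₁
  obtain ⟨hh₂int, hh₂le⟩ := my_fisher_global hnn₂ hint₂ hconv₂ hI₂fin hI₂
  have hsup₂ := my_density_le_sqrt hnn₂ hint₂ h1₂ hFTC₂ hconv₂ hI₂fin hI₂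
  have hsup₃ := my_density_le_sqrt hnn₃ hint₃ h1₃ hFTC₃ hconv₃ hI₃fin hI₃
  have hh₁nn : ∀ u, 0 ≤ p₁' u ^ 2 / p₁ u := fun u => div_nonneg (sq_nonneg _) (hnn₁ u)
  have hh₂nn : ∀ u, 0 ≤ p₂' u ^ 2 / p₂ u := fun u => div_nonneg (sq_nonneg _) (hnn₂ u)
  -- facts about r
  have hr_int : Integrable r :=
    (my_conv_int hint₂ hint₃).congr (Filter.Eventually.of_forall fun y => (hr y).symm)
  have hr_nn : ∀ y, 0 ≤ r y := by
    intro y; rw [hr y]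
    exact integral_nonneg fun z => mul_nonneg (hnn₂ _) (hnn₃ _)
  have hr_bd : ∀ y, r y ≤ Real.sqrt I := by
    intro y; rw [hr y]
    calc ∫ z, p₂ (y - z) * p₃ z ≤ ∫ z, Real.sqrt I * p₃ z :=
          integral_mono_of_nonneg
            (Filter.Eventually.of_forall fun z => mul_nonneg (hnn₂ _) (hnn₃ _))
            (hint₃.const_mul _)
            (Filter.Eventually.of_forall fun z =>
              mul_le_mul_of_nonneg_right (hsup₂ _) (hnn₃ _))
      _ = Real.sqrt I := by rw [integral_const_mul, h1₃, mul_one]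
  -- the function g = h₂ ⋆ p₃
  have hg_int : Integrable (fun y => ∫ z, (p₂' (y - z) ^ 2 / p₂ (y - z)) * p₃ z) :=
    my_conv_int hh₂int hint₃
  have hg_nn : ∀ y, 0 ≤ ∫ z, (p₂' (y - z) ^ 2 / p₂ (y - z)) * p₃ z := fun y =>
    integral_nonneg fun z => mul_nonneg (hh₂nn _) (hnn₃ _)
  have hg_bd : ∀ y, (∫ z, (p₂' (y - z) ^ 2 / p₂ (y - z)) * p₃ z) ≤ Real.sqrt I * I := by
    intro y
    calc (∫ z, (p₂' (y - z) ^ 2 / p₂ (y - z)) * p₃ z)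
        ≤ ∫ z, (p₂' (y - z) ^ 2 / p₂ (y - z)) * Real.sqrt I :=
          integral_mono_of_nonneg
            (Filter.Eventually.of_forall fun z => mul_nonneg (hh₂nn _) (hnn₃ _))
            ((hh₂int.comp_sub_left y).mul_const _)
            (Filter.Eventually.of_forall fun z =>
              mul_le_mul_of_nonneg_left (hsup₃ _) (hh₂nn _))
      _ = (∫ z, p₂' (y - z) ^ 2 / p₂ (y - z)) * Real.sqrt I := integral_mul_const _ _
      _ = (∫ u, p₂' u ^ 2 / p₂ u) * Real.sqrt I := by
          rw [integral_sub_left_eq_self (fun u => p₂' u ^ 2 / p₂ u) volume y]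
      _ ≤ I * Real.sqrt I := mul_le_mul_of_nonneg_right hh₂le hs0
      _ = Real.sqrt I * I := mul_comm _ _
  -- pointwise bound on |r'|
  have hr'_bd : ∀ y, |r' y| ≤
      Real.sqrt (∫ z, (p₂' (y - z) ^ 2 / p₂ (y - z)) * p₃ z) * Real.sqrt (r y) := by
    intro y
    rw [hr' y]
    have hint_F : Integrable (fun z => (p₂' (y - z) ^ 2 / p₂ (y - z)) * p₃ z) := by
      refine ((hh₂int.comp_sub_left y).mul_const (Real.sqrt I)).mono'
        ((hh₂int.comp_sub_left y).aestronglyMeasurable.mul hint₃.aestronglyMeasurable)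
        (Filter.Eventually.of_forall fun z => ?_)
      rw [Real.norm_eq_abs, abs_of_nonneg (mul_nonneg (hh₂nn _) (hnn₃ _))]
      exact mul_le_mul_of_nonneg_left (hsup₃ _) (hh₂nn _)
    have hint_G : Integrable (fun z => p₂ (y - z) * p₃ z) := by
      refine (hint₃.const_mul (Real.sqrt I)).mono'
        ((hint₂.comp_sub_left y).aestronglyMeasurable.mul hint₃.aestronglyMeasurable)
        (Filter.Eventually.of_forall fun z => ?_)
      rw [Real.norm_eq_abs, abs_of_nonneg (mul_nonneg (hnn₂ _) (hnn₃ _))]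
      exact mul_le_mul_of_nonneg_right (hsup₂ _) (hnn₃ _)
    have e1 : ∀ z, |p₂' (y - z) * p₃ z| =
        Real.sqrt ((p₂' (y - z) ^ 2 / p₂ (y - z)) * p₃ z) *
          Real.sqrt (p₂ (y - z) * p₃ z) := by
      intro z
      rw [abs_mul, abs_of_nonneg (hnn₃ z), my_ptwise hnn₂ hconv₂ (y - z),
        Real.sqrt_mul (hh₂nn _) (p₃ z), Real.sqrt_mul (hnn₂ _) (p₃ z)]
      have h3 : Real.sqrt (p₃ z) * Real.sqrt (p₃ z) = p₃ z := Real.mul_self_sqrt (hnn₃ z)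
      linear_combination (-(Real.sqrt (p₂' (y - z) ^ 2 / p₂ (y - z)) *
        Real.sqrt (p₂ (y - z)))) * h3
    calc |∫ z, p₂' (y - z) * p₃ z| ≤ ∫ z, |p₂' (y - z) * p₃ z| := by
          simpa only [Real.norm_eq_abs] using
            norm_integral_le_integral_norm (μ := volume) (fun z => p₂' (y - z) * p₃ z)
      _ = ∫ z, Real.sqrt ((p₂' (y - z) ^ 2 / p₂ (y - z)) * p₃ z) *
            Real.sqrt (p₂ (y - z) * p₃ z) :=
          integral_congr_ae (Filter.Eventually.of_forall e1)
      _ ≤ Real.sqrt (∫ z, (p₂' (y - z) ^ 2 / p₂ (y - z)) * p₃ z) *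
            Real.sqrt (∫ z, p₂ (y - z) * p₃ z) :=
          my_cs' (fun z => mul_nonneg (hh₂nn _) (hnn₃ _))
            (fun z => mul_nonneg (hnn₂ _) (hnn₃ _)) hint_F hint_G
      _ = Real.sqrt (∫ z, (p₂' (y - z) ^ 2 / p₂ (y - z)) * p₃ z) * Real.sqrt (r y) := by
          rw [← hr y]
  -- main estimate
  rw [hp'' x]
  have hF_int : Integrable
      (fun y => (p₁' (x - y) ^ 2 / p₁ (x - y)) *
        ∫ z, (p₂' (y - z) ^ 2 / p₂ (y - z)) * p₃ z) := by
    refine ((hh₁int.comp_sub_left x).mul_const (Real.sqrt I * I)).mono'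
      ((hh₁int.comp_sub_left x).aestronglyMeasurable.mul hg_int.aestronglyMeasurable)
      (Filter.Eventually.of_forall fun y => ?_)
    rw [Real.norm_eq_abs, abs_of_nonneg (mul_nonneg (hh₁nn _) (hg_nn y))]
    exact mul_le_mul_of_nonneg_left (hg_bd y) (hh₁nn _)
  have hG_int : Integrable (fun y => p₁ (x - y) * r y) := by
    refine ((hint₁.comp_sub_left x).mul_const (Real.sqrt I)).mono'
      ((hint₁.comp_sub_left x).aestronglyMeasurable.mul hr_int.aestronglyMeasurable)
      (Filter.Eventually.of_forall fun y => ?_)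
    rw [Real.norm_eq_abs, abs_of_nonneg (mul_nonneg (hnn₁ _) (hr_nn y))]
    exact mul_le_mul_of_nonneg_left (hr_bd y) (hnn₁ _)
  have key1 : ∀ y, |p₁' (x - y) * r' y| ≤
      Real.sqrt ((p₁' (x - y) ^ 2 / p₁ (x - y)) *
          ∫ z, (p₂' (y - z) ^ 2 / p₂ (y - z)) * p₃ z) *
        Real.sqrt (p₁ (x - y) * r y) := by
    intro y
    rw [abs_mul, my_ptwise hnn₁ hconv₁ (x - y)]
    refine le_trans (mul_le_mul_of_nonneg_left (hr'_bd y)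
      (mul_nonneg (Real.sqrt_nonneg _) (Real.sqrt_nonneg _))) (le_of_eq ?_)
    rw [Real.sqrt_mul (hh₁nn _), Real.sqrt_mul (hnn₁ _) (r y)]
    ring
  have hFle : (∫ y, (p₁' (x - y) ^ 2 / p₁ (x - y)) *
      ∫ z, (p₂' (y - z) ^ 2 / p₂ (y - z)) * p₃ z) ≤ Real.sqrt I * I * I := by
    calc (∫ y, (p₁' (x - y) ^ 2 / p₁ (x - y)) *
          ∫ z, (p₂' (y - z) ^ 2 / p₂ (y - z)) * p₃ z)
        ≤ ∫ y, (p₁' (x - y) ^ 2 / p₁ (x - y)) * (Real.sqrt I * I) :=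
          integral_mono_of_nonneg
            (Filter.Eventually.of_forall fun y => mul_nonneg (hh₁nn _) (hg_nn y))
            ((hh₁int.comp_sub_left x).mul_const _)
            (Filter.Eventually.of_forall fun y =>
              mul_le_mul_of_nonneg_left (hg_bd y) (hh₁nn _))
      _ = (∫ y, p₁' (x - y) ^ 2 / p₁ (x - y)) * (Real.sqrt I * I) := integral_mul_const _ _
      _ = (∫ u, p₁' u ^ 2 / p₁ u) * (Real.sqrt I * I) := by
          rw [integral_sub_left_eq_self (fun u => p₁' u ^ 2 / p₁ u) volume x]
      _ ≤ I * (Real.sqrt I * I) :=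
          mul_le_mul_of_nonneg_right hh₁le (mul_nonneg hs0 hI0)
      _ = Real.sqrt I * I * I := by ring
  calc |∫ y, p₁' (x - y) * r' y| ≤ ∫ y, |p₁' (x - y) * r' y| := by
        simpa only [Real.norm_eq_abs] using
          norm_integral_le_integral_norm (μ := volume) (fun y => p₁' (x - y) * r' y)
    _ ≤ ∫ y, Real.sqrt ((p₁' (x - y) ^ 2 / p₁ (x - y)) *
          ∫ z, (p₂' (y - z) ^ 2 / p₂ (y - z)) * p₃ z) * Real.sqrt (p₁ (x - y) * r y) :=
        integral_mono_of_nonneg (Filter.Eventually.of_forall fun y => abs_nonneg _)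
          (my_sqrt_mul_int hF_int hG_int) (Filter.Eventually.of_forall key1)
    _ ≤ Real.sqrt (∫ y, (p₁' (x - y) ^ 2 / p₁ (x - y)) *
          ∫ z, (p₂' (y - z) ^ 2 / p₂ (y - z)) * p₃ z) *
        Real.sqrt (∫ y, p₁ (x - y) * r y) :=
        my_cs' (fun y => mul_nonneg (hh₁nn _) (hg_nn y))
          (fun y => mul_nonneg (hnn₁ _) (hr_nn y)) hF_int hG_int
    _ ≤ Real.sqrt (Real.sqrt I * I * I) * Real.sqrt (p x) := by
        rw [← hp x]
        exact mul_le_mul_of_nonneg_right (Real.sqrt_le_sqrt hFle) (Real.sqrt_nonneg _)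
    _ = I ^ ((5 : ℝ) / 4) * Real.sqrt (p x) := by rw [my_sqrt_five hI0]
end

section
/- If X has an absolutely continuous density p, then for any s > 0, ∫ |x|^s |p'(x)| dx ≤ √(β_{2s} I(X)), where β_{2s} = E|X|^{2s}. -/
open MeasureTheory Real

open scoped ENNReal

open scoped NNReal

/-- If `X` has an absolutely continuous density `p` (with Radon–Nikodym derivative `p'`,
vanishing where `p` vanishes), then for any `s > 0`,
`∫ |x|^s |p'(x)| dx ≤ √(β_{2s} I(X))` where `β_{2s} = ∫ |x|^{2s} p(x) dx`.
The inequality is stated in `ℝ≥0∞`, so it holds whether or not the right-hand side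
is finite. -/
theorem moment_weighted_deriv_bound
    (p p' : ℝ → ℝ) (s : ℝ) (hs : 0 < s)
    (hnn : ∀ x, 0 ≤ p x) (hint : Integrable p) (h1 : ∫ x, p x = 1)
    (hFTC : ∀ a b : ℝ, p b - p a = ∫ x in a..b, p' x)
    (hconv : ∀ x, p x = 0 → p' x = 0) :
    ∫⁻ x : ℝ, ENNReal.ofReal (|x| ^ s * |p' x|) ≤
      (∫⁻ x : ℝ, ENNReal.ofReal (|x| ^ (2 * s) * p x)) ^ ((1 : ℝ) / 2) *
      (∫⁻ x in {x | 0 < p x}, ENNReal.ofReal ((p' x) ^ 2 / p x)) ^ ((1 : ℝ) / 2) := by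
  classical
  set μ : Measure ℝ := volume with hμ
  set S : Set ℝ := {x | 0 < p x} with hSdef
  set f : ℝ → ℝ≥0∞ := fun x => ENNReal.ofReal (|x| ^ s * |p' x|) with hfdef
  set g : ℝ → ℝ≥0∞ := fun x => ENNReal.ofReal (|x| ^ (2 * s) * p x) with hgdef
  set k : ℝ → ℝ≥0∞ := fun x => ENNReal.ofReal ((p' x) ^ 2 / p x) with hkdef
  set A : ℝ≥0∞ := ∫⁻ x, g x ∂μ with hAdef
  set B : ℝ≥0∞ := ∫⁻ x in S, k x ∂μ with hBdef
  -- measurability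
  have hpm : AEMeasurable p μ := hint.aemeasurable
  have hwm : Measurable fun x : ℝ => |x| ^ (2 * s) :=
    (continuous_abs.rpow_const (fun x => Or.inr (by positivity))).measurable
  have hgm : AEMeasurable g μ := ((hwm.aemeasurable.mul hpm)).ennreal_ofReal
  have hSnm : NullMeasurableSet S μ := nullMeasurableSet_lt aemeasurable_const hpm
  -- pointwise bound
  have ptwise : ∀ t : ℝ, 0 < t → ∀ x,
      f x ≤ ENNReal.ofReal t * g x
        + S.indicator (fun x => ENNReal.ofReal (1/(4*t)) * k x) x := by
    intro t ht x
    rcases eq_or_lt_of_le (hnn x) with hp0 | hp0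
    · have : p' x = 0 := hconv x hp0.symm
      simp [hfdef, this]
    · have hxS : x ∈ S := hp0
      rw [Set.indicator_of_mem hxS]
      have hco : (0:ℝ) ≤ 1/(4*t) := by positivity
      calc f x ≤ ENNReal.ofReal (t * (|x| ^ (2*s) * p x) + (1/(4*t)) * ((p' x)^2 / p x)) := by
            apply ENNReal.ofReal_le_ofReal
            have ha2 : |x| ^ (2*s) = (|x|^s)^2 := by
              rw [mul_comm, Real.rpow_mul (abs_nonneg x), Real.rpow_two]
            have hq2 : (p' x)^2 = |p' x|^2 := (sq_abs _).symm
            rw [ha2, hq2]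
            set a := |x|^s with hadef
            set q := |p' x| with hqdef
            have h4 : 0 < 4 * t * p x := by positivity
            have e1 : (1/(4*t)) * (q^2 / p x) = q^2 / (4*t*p x) := by field_simp
            rw [e1, ← sub_le_iff_le_add', le_div_iff₀ h4]
            nlinarith [sq_nonneg (2*t*(p x)*a - q)]
        _ ≤ ENNReal.ofReal (t * (|x| ^ (2*s) * p x))
              + ENNReal.ofReal ((1/(4*t)) * ((p' x)^2 / p x)) := ENNReal.ofReal_add_le
        _ = ENNReal.ofReal t * g x + ENNReal.ofReal (1/(4*t)) * k x := by
            rw [ENNReal.ofReal_mul ht.le, ENNReal.ofReal_mul hco]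
  -- indicator rewriting
  have hindic : ∀ t : ℝ,
      (∫⁻ x, S.indicator (fun x => ENNReal.ofReal (1/(4*t)) * k x) x ∂μ)
        = ENNReal.ofReal (1/(4*t)) * B := by
    intro t
    rw [lintegral_indicator₀ hSnm, hBdef, lintegral_const_mul' _ _ ENNReal.ofReal_ne_top]
  -- key bound for restricted measures
  have key : ∀ ν : Measure ℝ, ν ≤ μ → ∀ t : ℝ, 0 < t →
      ∫⁻ x, f x ∂ν ≤ ENNReal.ofReal t * (∫⁻ x, g x ∂ν) + ENNReal.ofReal (1/(4*t)) * B := by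
    intro ν hν t ht
    calc ∫⁻ x, f x ∂ν
        ≤ ∫⁻ x, (ENNReal.ofReal t * g x
            + S.indicator (fun x => ENNReal.ofReal (1/(4*t)) * k x) x) ∂ν :=
          lintegral_mono (ptwise t ht)
      _ = (∫⁻ x, ENNReal.ofReal t * g x ∂ν)
            + ∫⁻ x, S.indicator (fun x => ENNReal.ofReal (1/(4*t)) * k x) x ∂ν :=
          lintegral_add_left' ((hgm.mono_measure hν).const_mul _) _
      _ ≤ ENNReal.ofReal t * (∫⁻ x, g x ∂ν) + ENNReal.ofReal (1/(4*t)) * B := by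
          rw [lintegral_const_mul' _ _ ENNReal.ofReal_ne_top]
          gcongr
          rw [← hindic t]
          exact lintegral_mono' hν le_rfl
  -- A ≠ 0
  have hA0 : A ≠ 0 := by
    intro hA0
    have hgz : g =ᵐ[μ] 0 := (lintegral_eq_zero_iff' hgm).mp hA0
    have hpz : p =ᵐ[μ] 0 := by
      have hx0 : ∀ᵐ x ∂μ, x ≠ (0:ℝ) := by
        rw [ae_iff]
        simpa using Real.volume_singleton (a := 0)
      filter_upwards [hgz, hx0] with x hx hx0
      have hgx0 : ENNReal.ofReal (|x| ^ (2*s) * p x) = 0 := hx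
      have hle : |x| ^ (2*s) * p x ≤ 0 := by
        by_contra h
        exact (ENNReal.ofReal_pos.mpr (lt_of_not_ge h)).ne' hgx0
      have hpos : 0 < |x| ^ (2*s) := Real.rpow_pos_of_pos (abs_pos.mpr hx0) _
      have hple : p x ≤ 0 := by nlinarith [hnn x]
      have : p x = 0 := le_antisymm hple (hnn x)
      simpa using this
    have hcontr : (1:ℝ) = 0 := by
      rw [← h1, integral_congr_ae hpz]
      simp
    norm_num at hcontr
  rcases eq_or_ne B 0 with hB0 | hB0
  · -- B = 0 : show LHS = 0
    obtain ⟨G, hGmeas, hGae⟩ := hgm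
    set T : ℕ → Set ℝ := fun n => {x | G x ≤ n} ∩ Set.Icc (-(n:ℝ)) n with hTdef
    have hTmeas : ∀ n, MeasurableSet (T n) :=
      fun n => (hGmeas measurableSet_Iic).inter measurableSet_Icc
    have hTzero : ∀ n, ∫⁻ x in T n, f x ∂μ = 0 := by
      intro n
      set ν := μ.restrict (T n) with hν
      have hνle : ν ≤ μ := Measure.restrict_le_self
      set C : ℝ≥0∞ := (n : ℝ≥0∞) * ν Set.univ with hCdef
      have hCtop : C ≠ ∞ := by
        have : ν Set.univ ≤ μ (Set.Icc (-(n:ℝ)) n) := by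
          rw [hν, Measure.restrict_apply_univ]
          exact measure_mono (Set.inter_subset_right)
        refine ENNReal.mul_ne_top (by simp) (ne_top_of_le_ne_top ?_ this)
        simp [hμ, Real.volume_Icc]
      have hgC : ∫⁻ x, g x ∂ν ≤ C := by
        have hGae' : g =ᵐ[ν] G := ae_restrict_of_ae hGae
        rw [lintegral_congr_ae hGae']
        calc ∫⁻ x, G x ∂ν ≤ ∫⁻ _, (n:ℝ≥0∞) ∂ν := by
              apply lintegral_mono_ae
              filter_upwards [ae_restrict_mem (hTmeas n)] with x hx
              exact hx.1
          _ = C := lintegral_const _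
      have hsmall : ∀ ε : ℝ≥0, 0 < ε → ∫⁻ x, f x ∂ν ≤ ε := by
        intro ε hε
        have hc1 : (0:ℝ) < C.toReal + 1 := by positivity
        set t : ℝ := (ε:ℝ) / (C.toReal + 1) with htdef
        have ht : 0 < t := div_pos (by exact_mod_cast hε) hc1
        calc ∫⁻ x, f x ∂ν ≤ ENNReal.ofReal t * (∫⁻ x, g x ∂ν) + ENNReal.ofReal (1/(4*t)) * B :=
              key ν hνle t ht
          _ ≤ ENNReal.ofReal t * C + 0 := by
              rw [hB0, mul_zero]; gcongr
          _ ≤ ENNReal.ofReal t * ENNReal.ofReal (C.toReal + 1) := by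
              rw [add_zero]
              gcongr
              calc C = ENNReal.ofReal C.toReal := (ENNReal.ofReal_toReal hCtop).symm
                _ ≤ ENNReal.ofReal (C.toReal + 1) := ENNReal.ofReal_le_ofReal (by linarith)
          _ = ENNReal.ofReal ε := by
              rw [← ENNReal.ofReal_mul ht.le, htdef, div_mul_cancel₀ _ hc1.ne']
          _ = ε := ENNReal.ofReal_coe_nnreal
      have : ∫⁻ x, f x ∂ν ≤ 0 := by
        refine ENNReal.le_of_forall_pos_le_add fun ε hε _ => ?_
        rw [zero_add]
        exact hsmall ε hε
      exact le_antisymm this zero_le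
    have hcover : μ.restrict (⋃ n, T n) = μ := by
      have hGfin : ∀ᵐ x ∂μ, G x ≠ ∞ := by
        filter_upwards [hGae] with x hx
        rw [← hx]; exact ENNReal.ofReal_ne_top
      have : (⋃ n, T n) =ᵐ[μ] (Set.univ : Set ℝ) := by
        rw [Filter.eventuallyEq_set]
        filter_upwards [hGfin] with x hx
        simp only [Set.mem_univ, iff_true, Set.mem_iUnion]
        obtain ⟨n₁, hn₁⟩ := ENNReal.exists_nat_gt hx
        obtain ⟨n₂, hn₂⟩ := exists_nat_ge |x|
        refine ⟨max n₁ n₂, ⟨hn₁.le.trans ?_, ?_⟩⟩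
        · exact_mod_cast Nat.cast_le.mpr (le_max_left _ _)
        · have h2 : |x| ≤ (max n₁ n₂ : ℕ) := hn₂.trans (by exact_mod_cast le_max_right n₁ n₂)
          exact ⟨neg_le_of_abs_le h2, le_of_abs_le h2⟩
      rw [Measure.restrict_congr_set this, Measure.restrict_univ]
    have : ∫⁻ x, f x ∂μ = 0 := by
      have h := lintegral_iUnion_le (μ := μ) T f
      rw [hcover] at h
      simpa [hTzero] using (le_antisymm (h.trans (by simp [hTzero])) zero_le)
    rw [this]
    exact zero_le
  · -- B ≠ 0
    rcases eq_or_ne A ∞ with hAtop | hAtop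
    · have : (A) ^ ((1:ℝ)/2) * B ^ ((1:ℝ)/2) = ∞ := by
        rw [hAtop, ENNReal.top_rpow_of_pos (by norm_num)]
        exact ENNReal.top_mul (by simp [ENNReal.rpow_eq_zero_iff, hB0])
      rw [this]; exact le_top
    rcases eq_or_ne B ∞ with hBtop | hBtop
    · have : (A) ^ ((1:ℝ)/2) * B ^ ((1:ℝ)/2) = ∞ := by
        rw [hBtop, ENNReal.top_rpow_of_pos (by norm_num)]
        exact ENNReal.mul_top (by simp [ENNReal.rpow_eq_zero_iff, hA0, hAtop])
      rw [this]; exact le_top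
    · -- both finite and nonzero
      set a : ℝ := A.toReal with hadef
      set b : ℝ := B.toReal with hbdef
      have ha : 0 < a := ENNReal.toReal_pos hA0 hAtop
      have hb : 0 < b := ENNReal.toReal_pos hB0 hBtop
      set t : ℝ := Real.sqrt b / (2 * Real.sqrt a) with htdef
      have hsa : 0 < Real.sqrt a := Real.sqrt_pos.mpr ha
      have hsb : 0 < Real.sqrt b := Real.sqrt_pos.mpr hb
      have ht : 0 < t := by positivity
      have harith : t * a + (1/(4*t)) * b = Real.sqrt a * Real.sqrt b := by
        have h1a : Real.sqrt a * Real.sqrt a = a := Real.mul_self_sqrt ha.le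
        have h1b : Real.sqrt b * Real.sqrt b = b := Real.mul_self_sqrt hb.le
        rw [htdef]
        field_simp
        nlinarith [h1a, h1b]
      calc ∫⁻ x, f x ∂μ ≤ ENNReal.ofReal t * A + ENNReal.ofReal (1/(4*t)) * B :=
            key μ le_rfl t ht
        _ = ENNReal.ofReal t * ENNReal.ofReal a + ENNReal.ofReal (1/(4*t)) * ENNReal.ofReal b := by
            rw [hadef, hbdef, ENNReal.ofReal_toReal hAtop, ENNReal.ofReal_toReal hBtop]
        _ = ENNReal.ofReal (t * a + (1/(4*t)) * b) := by
            rw [← ENNReal.ofReal_mul ht.le, ← ENNReal.ofReal_mul (by positivity),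
              ENNReal.ofReal_add (by positivity) (by positivity)]
        _ = ENNReal.ofReal (Real.sqrt a * Real.sqrt b) := by rw [harith]
        _ = A ^ ((1:ℝ)/2) * B ^ ((1:ℝ)/2) := by
            rw [ENNReal.ofReal_mul hsa.le,
              Real.sqrt_eq_rpow, Real.sqrt_eq_rpow,
              ← ENNReal.ofReal_rpow_of_nonneg ha.le (by norm_num),
              ← ENNReal.ofReal_rpow_of_nonneg hb.le (by norm_num),
              ENNReal.ofReal_toReal hAtop, ENNReal.ofReal_toReal hBtop]
end
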